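/- arXiv:2107.13615 — 4 statements merged into one kernel-verified Lean document; each statement's English description precedes it below -/
import Mathlib

section
/- Let n ≥ 1 and let c_1,…,c_n be integers with c_i ≥ 2 for all i. Then there exists an n-PTMC S in Λ_n such that the connected components of the subgraph of Λ_n induced by S are exactly the boxes B_z = {v ∈ ℤ^n : z_i(c_i+1)+1 ≤ v_i ≤ z_i(c_i+1)+c_i−1 for all i}, for z ∈ ℤ^n (each a translate of the box Π_{i=1}^n {0,…,c_i−2}, i.e. a cartesian product of paths of length c_i−2), and such that any two distinct components are at ℓ1-distance at least 3, this minimum distance 3 being attained. -/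
/-- The `n`-dimensional grid graph `Λ_n` on `ℤ^n`: two vertices are adjacent
iff their `ℓ1`-distance is `1`. -/
def gridGraph (n : ℕ) : SimpleGraph (Fin n → ℤ) where
  Adj u v := ∑ i, |u i - v i| = 1
  symm := by
    constructor
    intro u v h
    have : ∑ i, |v i - u i| = ∑ i, |u i - v i| :=
      Finset.sum_congr rfl fun i _ => abs_sub_comm _ _
    rw [this]; exact h
  loopless := by
    constructor
    intro u h
    simp at h

/-- The truncated distance `ρ` on `ℤ^n` (valued in `ℕ`): the Hamming distance if
all coordinates differ by at most `1`, and `n+1` otherwise. -/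
def trho (n : ℕ) (u v : Fin n → ℤ) : ℕ :=
  if ∀ i, |u i - v i| ≤ 1 then (Finset.univ.filter fun i => u i ≠ v i).card
  else n + 1

/-- Truncated distance from a point to a set, as the infimum of truncated distances. -/
noncomputable def trhoSet (n : ℕ) (u : Fin n → ℤ) (S : Set (Fin n → ℤ)) : ℕ :=
  sInf {d | ∃ s ∈ S, trho n u s = d}

/-- The vertex set (in `ℤ^n`) of a connected component `H` of the subgraph of `Λ_n`
induced by `S`. -/
def compVerts (n : ℕ) (S : Set (Fin n → ℤ))
    (H : ((gridGraph n).induce S).ConnectedComponent) : Set (Fin n → ℤ) :=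
  {v | ∃ h : v ∈ S, ((gridGraph n).induce S).connectedComponentMk ⟨v, h⟩ = H}

/-- `S` is a `t`-perfect truncated-metric code in `Λ_n`. -/
def IsPTMC (n t : ℕ) (S : Set (Fin n → ℤ)) : Prop :=
  (∀ u : Fin n → ℤ, ∃! s, s ∈ S ∧ trho n u s = trhoSet n u S) ∧
  (∀ u : Fin n → ℤ, ∃! H : ((gridGraph n).induce S).ConnectedComponent,
    trhoSet n u (compVerts n S H) ≤ t)


/-- Coordinate membership in a box row. -/
def inBoxZ (m z x : ℤ) : Prop := z * (m+1) + 1 ≤ x ∧ x ≤ z * (m+1) + m - 1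

/-- Nearest box point to `x` in its row. -/
def nearZ (m x : ℤ) : ℤ := if x % (m+1) = 0 then x + 1 else if x % (m+1) = m then x - 1 else x

lemma ediv_of_rep {m z x r : ℤ} (hm : 2 ≤ m) (hx : x = z * (m+1) + r) (h0 : 0 ≤ r)
    (h1 : r < m + 1) : x / (m+1) = z ∧ x % (m+1) = r := by
  have hp : (0:ℤ) < m + 1 := by linarith
  have hd : x / (m+1) = z := by
    rw [hx, add_comm, Int.add_mul_ediv_right _ _ hp.ne', Int.ediv_eq_zero_of_lt h0 h1, zero_add]
  refine ⟨hd, ?_⟩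
  have := Int.mul_ediv_add_emod x (m+1)
  rw [hd] at this
  have : x % (m+1) = x - (m+1) * z := by linarith
  rw [this, hx]; ring

lemma inBoxZ_iff {m z x : ℤ} (hm : 2 ≤ m) :
    inBoxZ m z x ↔ x / (m+1) = z ∧ 1 ≤ x % (m+1) ∧ x % (m+1) ≤ m - 1 := by
  constructor
  · rintro ⟨h1, h2⟩
    obtain ⟨hd, hr⟩ := ediv_of_rep hm (x := x) (z := z) (r := x - z * (m+1)) (by ring) (by linarith) (by linarith)
    exact ⟨hd, by rw [hr]; constructor <;> linarith⟩
  · rintro ⟨hd, h1, h2⟩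
    have := Int.mul_ediv_add_emod x (m+1)
    rw [hd] at this
    constructor <;> [nlinarith; nlinarith]

lemma inBoxZ_unique {m z z' x : ℤ} (hm : 2 ≤ m) (h : inBoxZ m z x) (h' : inBoxZ m z' x) :
    z = z' := by
  rw [inBoxZ_iff hm] at h h'
  rw [← h.1, h'.1]

lemma inBoxZ_gap {m z z' a b : ℤ} (hm : 2 ≤ m) (h : inBoxZ m z a) (h' : inBoxZ m z' b)
    (hzz : z ≠ z') : 3 ≤ |a - b| := by
  obtain ⟨h1, h2⟩ := h; obtain ⟨h1', h2'⟩ := h'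
  rcases lt_or_gt_of_ne hzz with hlt | hlt
  · have : z + 1 ≤ z' := hlt
    rw [abs_sub_comm, abs_of_nonneg (by nlinarith)]
    nlinarith
  · have : z' + 1 ≤ z := hlt
    rw [abs_of_nonneg (by nlinarith)]
    nlinarith

/-- The remainder is in [0, m]. -/
lemma emod_mem {m x : ℤ} (hm : 2 ≤ m) : 0 ≤ x % (m+1) ∧ x % (m+1) ≤ m := by
  have hp : (0:ℤ) < m + 1 := by linarith
  exact ⟨Int.emod_nonneg x hp.ne', by have := Int.emod_lt_of_pos x hp; linarith⟩

/-- nearZ lies in the box row of `x / (m+1)`. -/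
lemma nearZ_inBox {m x : ℤ} (hm : 2 ≤ m) : inBoxZ m (x / (m+1)) (nearZ m x) := by
  have hp : (0:ℤ) < m + 1 := by linarith
  have hem := Int.mul_ediv_add_emod x (m+1)
  obtain ⟨hr0, hr1⟩ := emod_mem (x := x) hm
  rw [inBoxZ_iff hm]
  unfold nearZ
  split_ifs with h0 hm'
  · have hx1 : x + 1 = (x/(m+1)) * (m+1) + 1 := by linarith
    obtain ⟨hd, hr⟩ := ediv_of_rep hm hx1 (by norm_num) (by linarith)
    exact ⟨hd, by rw [hr]; constructor <;> linarith⟩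
  · have hx1 : x - 1 = (x/(m+1)) * (m+1) + (m-1) := by linarith
    obtain ⟨hd, hr⟩ := ediv_of_rep hm hx1 (by linarith) (by linarith)
    exact ⟨hd, by rw [hr]; constructor <;> linarith⟩
  · refine ⟨rfl, ?_, ?_⟩
    · rcases eq_or_lt_of_le hr0 with h | h
      · exact absurd h.symm h0
      · linarith
    · rcases eq_or_lt_of_le hr1 with h | h
      · exact absurd h hm'
      · linarith

lemma nearZ_dist {m x : ℤ} : |x - nearZ m x| ≤ 1 := by
  unfold nearZ; split_ifs <;> simp

/-- Any box point within distance 1 of x lies in row x / (m+1). -/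
lemma inBoxZ_close {m z x y : ℤ} (hm : 2 ≤ m) (h : inBoxZ m z y) (hd : |x - y| ≤ 1) :
    z = x / (m+1) := by
  have hp : (0:ℤ) < m + 1 := by linarith
  have hem := Int.mul_ediv_add_emod x (m+1)
  obtain ⟨hr0, hr1⟩ := emod_mem (x := x) hm
  rw [inBoxZ_iff hm] at h
  set q := x / (m+1) with hq
  set r := x % (m+1) with hr
  have hyd : y = x - 1 ∨ y = x ∨ y = x + 1 := by
    rcases abs_le.mp hd with ⟨ha, hb⟩; omega
  -- y = q*(m+1) + (r + d) with d ∈ {-1,0,1}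
  have key : ∀ d : ℤ, y = q * (m+1) + (r + d) → -1 ≤ d → d ≤ 1 → z = q := by
    intro d hy hd1 hd2
    by_cases hc1 : 0 ≤ r + d
    · by_cases hc2 : r + d < m + 1
      · obtain ⟨hdv, _⟩ := ediv_of_rep hm hy hc1 hc2
        rw [← h.1, hdv]
      · -- r + d = m+1, so r = m, d = 1; y = (q+1)(m+1)+0, y % = 0, contradiction
        have : r + d = m + 1 := by omega
        have hy' : y = (q+1) * (m+1) + 0 := by rw [hy]; ring_nf; linarith
        obtain ⟨_, hmd⟩ := ediv_of_rep hm hy' (le_refl 0) (by linarith)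
        omega
    · -- r + d = -1, y = (q-1)(m+1)+m, y % = m, contradiction
      have : r + d = -1 := by omega
      have hy' : y = (q-1) * (m+1) + m := by rw [hy]; ring_nf; linarith
      obtain ⟨_, hmd⟩ := ediv_of_rep hm hy' (by linarith) (by linarith)
      omega
  rcases hyd with h' | h' | h'
  · exact key (-1) (by rw [h']; linarith) (by norm_num) (by norm_num)
  · exact key 0 (by rw [h']; linarith) (by norm_num) (by norm_num)
  · exact key 1 (by rw [h']; linarith) (by norm_num) (by norm_num)

/-- x itself is a box point iff its remainder is in [1, m-1] iff nearZ m x = x. -/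
lemma nearZ_eq_self_iff {m x : ℤ} (hm : 2 ≤ m) :
    nearZ m x = x ↔ (1 ≤ x % (m+1) ∧ x % (m+1) ≤ m - 1) := by
  obtain ⟨hr0, hr1⟩ := emod_mem (x := x) hm
  unfold nearZ
  split_ifs with h0 hm' <;> constructor <;> intro h <;> try omega

/-- If x's remainder is 0 or m, then the unique box point in row x/(m+1) within
distance 1 of x is nearZ m x. -/
lemma close_eq_nearZ {m x y : ℤ} (hm : 2 ≤ m) (h : inBoxZ m (x / (m+1)) y) (hd : |x - y| ≤ 1)
    (hr : x % (m+1) = 0 ∨ x % (m+1) = m) : y = nearZ m x := by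
  have hp : (0:ℤ) < m + 1 := by linarith
  have hem := Int.mul_ediv_add_emod x (m+1)
  rw [inBoxZ_iff hm] at h
  obtain ⟨hdv, h1, h2⟩ := h
  have hyd : y = x - 1 ∨ y = x ∨ y = x + 1 := by
    rcases abs_le.mp hd with ⟨ha, hb⟩; omega
  unfold nearZ
  rcases hr with hr | hr
  · rw [if_pos hr]
    rcases hyd with h' | h' | h'
    · exfalso
      have hy' : y = (x/(m+1) - 1) * (m+1) + m := by rw [h']; linear_combination hr - hem
      obtain ⟨_, hmd⟩ := ediv_of_rep hm hy' (by linarith) (by linarith)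
      omega
    · exfalso
      have hy' : y = (x/(m+1)) * (m+1) + 0 := by rw [h']; linear_combination hr - hem
      obtain ⟨_, hmd⟩ := ediv_of_rep hm hy' le_rfl (by linarith)
      omega
    · exact h'
  · rw [if_neg (by omega), if_pos hr]
    rcases hyd with h' | h' | h'
    · exact h'
    · exfalso
      have hy' : y = (x/(m+1)) * (m+1) + m := by rw [h']; linear_combination hr - hem
      obtain ⟨_, hmd⟩ := ediv_of_rep hm hy' (by linarith) (by linarith)
      omega
    · exfalso
      have hy' : y = (x/(m+1) + 1) * (m+1) + 0 := by rw [h']; linear_combination hr - hem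
      obtain ⟨_, hmd⟩ := ediv_of_rep hm hy' le_rfl (by linarith)
      omega

/-- If x's remainder is 0 or m, then x is not a box point value at distance 0
(i.e. any box point in any row differs from x). -/
lemma not_inBox_self {m z x : ℤ} (hm : 2 ≤ m) (hr : x % (m+1) = 0 ∨ x % (m+1) = m) :
    ¬ inBoxZ m z x := by
  rw [inBoxZ_iff hm]
  rintro ⟨_, h1, h2⟩
  omega

section Defs
variable (n : ℕ) (c : Fin n → ℤ)

def boxSet (z : Fin n → ℤ) : Set (Fin n → ℤ) := {v | ∀ i, inBoxZ (c i) (z i) (v i)}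

def codeS : Set (Fin n → ℤ) := {v | ∃ z, v ∈ boxSet n c z}

def zIndex (v : Fin n → ℤ) : Fin n → ℤ := fun i => v i / (c i + 1)

def nearPt (u : Fin n → ℤ) : Fin n → ℤ := fun i => nearZ (c i) (u i)

end Defs

section Lemmas
variable {n : ℕ} {c : Fin n → ℤ}

lemma zIndex_eq (hc : ∀ i, 2 ≤ c i) {z v : Fin n → ℤ} (h : v ∈ boxSet n c z) : z = zIndex n c v := by
  funext i
  exact ((inBoxZ_iff (hc i)).mp (h i)).1.symm

lemma mem_codeS_iff (hc : ∀ i, 2 ≤ c i) {v : Fin n → ℤ} : v ∈ codeS n c ↔ ∀ i, inBoxZ (c i) (zIndex n c v i) (v i) := by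
  constructor
  · rintro ⟨z, hz⟩ i
    have := zIndex_eq hc hz
    rw [← this]; exact hz i
  · intro h; exact ⟨zIndex n c v, h⟩

lemma nearPt_mem (hc : ∀ i, 2 ≤ c i) {u : Fin n → ℤ} : nearPt n c u ∈ boxSet n c (zIndex n c u) :=
  fun i => nearZ_inBox (hc i)

lemma zIndex_nearPt (hc : ∀ i, 2 ≤ c i) {u : Fin n → ℤ} : zIndex n c (nearPt n c u) = zIndex n c u :=
  (zIndex_eq hc (nearPt_mem hc)).symm

lemma nearPt_close {u : Fin n → ℤ} : ∀ i, |u i - nearPt n c u i| ≤ 1 := fun _ => nearZ_dist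

/-- Any code point close to u (coordinatewise within 1) is in the box of zIndex u. -/
lemma close_mem_box (hc : ∀ i, 2 ≤ c i) {u s : Fin n → ℤ} (hs : s ∈ codeS n c) (h : ∀ i, |u i - s i| ≤ 1) :
    s ∈ boxSet n c (zIndex n c u) := by
  obtain ⟨z, hz⟩ := hs
  have : z = zIndex n c u := by
    funext i; exact inBoxZ_close (hc i) (hz i) (h i)
  rwa [this] at hz

/-- Gap between distinct boxes in l1 distance. -/
lemma box_gap (hc : ∀ i, 2 ≤ c i) {z z' a b : Fin n → ℤ} (ha : a ∈ boxSet n c z) (hb : b ∈ boxSet n c z')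
    (hzz : z ≠ z') : 3 ≤ ∑ i, |a i - b i| := by
  obtain ⟨i, hi⟩ := Function.ne_iff.mp hzz
  have h3 : 3 ≤ |a i - b i| := inBoxZ_gap (hc i) (ha i) (hb i) hi
  calc (3:ℤ) ≤ |a i - b i| := h3
    _ ≤ ∑ j, |a j - b j| :=
      Finset.single_le_sum (f := fun j => |a j - b j|) (fun j _ => abs_nonneg _) (Finset.mem_univ i)

end Lemmas

section Conn
variable {n : ℕ} {c : Fin n → ℤ}

lemma box_reachable (hc : ∀ i, 2 ≤ c i) {z : Fin n → ℤ} {S : Set (Fin n → ℤ)}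
    (hS : boxSet n c z ⊆ S) :
    ∀ N : ℕ, ∀ a b : Fin n → ℤ, ∀ ha : a ∈ boxSet n c z, ∀ hb : b ∈ boxSet n c z,
      (∑ i, |a i - b i|) ≤ (N : ℤ) →
      ((gridGraph n).induce S).Reachable ⟨a, hS ha⟩ ⟨b, hS hb⟩ := by
  intro N
  induction N with
  | zero =>
    intro a b ha hb hsum
    have hab : a = b := by
      funext i
      have h0 : |a i - b i| ≤ 0 := by
        have hle : |a i - b i| ≤ ∑ j, |a j - b j| :=
          Finset.single_le_sum (f := fun j => |a j - b j|) (fun j _ => abs_nonneg _)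
            (Finset.mem_univ i)
        simpa using hle.trans hsum
      have := abs_nonneg (a i - b i)
      have : |a i - b i| = 0 := le_antisymm h0 this
      have := abs_eq_zero.mp this
      linarith
    subst hab
    rfl
  | succ N ih =>
    intro a b ha hb hsum
    by_cases hab : a = b
    · subst hab; rfl
    · obtain ⟨i, hi⟩ := Function.ne_iff.mp hab
      set d : ℤ := if a i < b i then a i + 1 else a i - 1 with hd
      set a' : Fin n → ℤ := Function.update a i d with ha'
      have hdabs : |a i - d| = 1 := by
        rw [hd]; split_ifs <;> simp
      have hdabs2 : |d - b i| = |a i - b i| - 1 := by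
        rcases lt_or_gt_of_ne hi with h | h
        · rw [hd, if_pos h, abs_sub_comm, abs_of_nonneg (by linarith),
            abs_sub_comm, abs_of_nonneg (by linarith)]
          ring
        · rw [hd, if_neg (by linarith), abs_of_nonneg (by linarith),
            abs_of_nonneg (by linarith)]
          ring
      have hdbox : inBoxZ (c i) (z i) d := by
        obtain ⟨h1, h2⟩ := ha i
        obtain ⟨h1', h2'⟩ := hb i
        rw [hd]; split_ifs with h <;> constructor <;> omega
      have ha'mem : a' ∈ boxSet n c z := by
        intro j
        by_cases hji : j = i
        · subst hji; rw [ha', Function.update_self]; exact hdbox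
        · rw [ha', Function.update_of_ne hji]; exact ha j
      have hadj : (gridGraph n).Adj a a' := by
        show ∑ j, |a j - a' j| = 1
        rw [Finset.sum_eq_single_of_mem i (Finset.mem_univ i)]
        · rw [ha', Function.update_self]; exact hdabs
        · intro j _ hji
          rw [ha', Function.update_of_ne hji]; simp
      have hsum' : (∑ j, |a' j - b j|) ≤ (N : ℤ) := by
        have key : ∑ j, |a' j - b j| = (∑ j, |a j - b j|) - 1 := by
          rw [← Finset.add_sum_erase Finset.univ (fun j => |a' j - b j|) (Finset.mem_univ i),
              ← Finset.add_sum_erase Finset.univ (fun j => |a j - b j|) (Finset.mem_univ i)]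
          have hrest : ∑ j ∈ Finset.univ.erase i, |a' j - b j|
              = ∑ j ∈ Finset.univ.erase i, |a j - b j| := by
            refine Finset.sum_congr rfl fun j hj => ?_
            rw [ha', Function.update_of_ne (Finset.ne_of_mem_erase hj)]
          rw [hrest, ha', Function.update_self, hdabs2]
          ring
        rw [key]
        push_cast at hsum ⊢
        linarith
      have hreach : ((gridGraph n).induce S).Reachable ⟨a', hS ha'mem⟩ ⟨b, hS hb⟩ :=
        ih a' b ha'mem hb hsum'
      exact (SimpleGraph.Adj.reachable (by exact hadj :
        ((gridGraph n).induce S).Adj ⟨a, hS ha⟩ ⟨a', hS ha'mem⟩)).trans hreach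

/-- Adjacent code vertices lie in the same box. -/
lemma adj_zIndex_eq (hc : ∀ i, 2 ≤ c i) {v w : codeS n c}
    (h : ((gridGraph n).induce (codeS n c)).Adj v w) : zIndex n c v.1 = zIndex n c w.1 := by
  by_contra hne
  have h3 : 3 ≤ ∑ i, |(v : Fin n → ℤ) i - (w : Fin n → ℤ) i| :=
    box_gap hc ((mem_codeS_iff hc).mp v.2) ((mem_codeS_iff hc).mp w.2) hne
  have h1 : ∑ i, |(v : Fin n → ℤ) i - (w : Fin n → ℤ) i| = 1 := h
  omega

noncomputable def zComp (hc : ∀ i, 2 ≤ c i)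
    (H : ((gridGraph n).induce (codeS n c)).ConnectedComponent) : Fin n → ℤ :=
  SimpleGraph.ConnectedComponent.lift (fun v => zIndex n c v.1)
    (by
      have key : ∀ (v w : codeS n c) (p : ((gridGraph n).induce (codeS n c)).Walk v w),
          zIndex n c v.1 = zIndex n c w.1 := by
        intro v w p
        induction p with
        | nil => rfl
        | cons hadj _ ih => exact (adj_zIndex_eq hc hadj).trans ih
      exact fun v w p _ => key v w p) H

lemma zComp_mk (hc : ∀ i, 2 ≤ c i) (v : codeS n c) :
    zComp hc (((gridGraph n).induce (codeS n c)).connectedComponentMk v) = zIndex n c v.1 :=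
  SimpleGraph.ConnectedComponent.lift_mk

lemma compVerts_eq_box (hc : ∀ i, 2 ≤ c i)
    (H : ((gridGraph n).induce (codeS n c)).ConnectedComponent) :
    compVerts n (codeS n c) H = boxSet n c (zComp hc H) := by
  obtain ⟨w, hw⟩ := H.exists_rep
  ext v
  constructor
  · rintro ⟨hv, hmk⟩
    rw [← hmk, zComp_mk hc]
    exact (mem_codeS_iff hc).mp hv
  · intro hv
    have hzw : zComp hc H = zIndex n c w.1 := by rw [← hw]; exact zComp_mk hc w
    have hwbox : w.1 ∈ boxSet n c (zComp hc H) := by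
      rw [hzw]; exact (mem_codeS_iff hc).mp w.2
    have hvS : v ∈ codeS n c := ⟨_, hv⟩
    refine ⟨hvS, ?_⟩
    have hsub : boxSet n c (zComp hc H) ⊆ codeS n c := fun x hx => ⟨_, hx⟩
    have hnn : (0:ℤ) ≤ ∑ i, |v i - w.1 i| := Finset.sum_nonneg fun i _ => abs_nonneg _
    have hreach := box_reachable hc hsub (∑ i, |v i - w.1 i|).toNat v w.1 hv hwbox
      (le_of_eq (Int.toNat_of_nonneg hnn).symm)
    rw [← hw]
    have : (⟨w.1, hsub hwbox⟩ : codeS n c) = w := Subtype.ext rfl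
    rw [← this]
    exact SimpleGraph.ConnectedComponent.sound hreach

lemma comp_eq_of_zComp (hc : ∀ i, 2 ≤ c i)
    {H H' : ((gridGraph n).induce (codeS n c)).ConnectedComponent}
    (h : zComp hc H = zComp hc H') : H = H' := by
  obtain ⟨w, hw⟩ := H.exists_rep
  have hwmem : w.1 ∈ compVerts n (codeS n c) H := ⟨w.2, by rw [← hw]; exact congrArg _ (Subtype.ext rfl)⟩
  rw [compVerts_eq_box hc] at hwmem
  have : w.1 ∈ compVerts n (codeS n c) H' := by
    rw [compVerts_eq_box hc, ← h]; exact hwmem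
  obtain ⟨hv, hmk⟩ := this
  rw [← hmk, ← hw]
  exact congrArg _ (Subtype.ext rfl)

end Conn


section PTMC
variable {n : ℕ} {c : Fin n → ℤ}

lemma nearZ_ne_iff {m x : ℤ} (h : nearZ m x ≠ x) : x % (m+1) = 0 ∨ x % (m+1) = m := by
  unfold nearZ at h
  split_ifs at h with h1 h2
  · exact Or.inl h1
  · exact Or.inr h2
  · exact absurd rfl h

/-- The minimal Hamming distance from u to the code. -/
def hamU (n : ℕ) (c : Fin n → ℤ) (u : Fin n → ℤ) : ℕ :=
  (Finset.univ.filter fun i => u i ≠ nearPt n c u i).card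

lemma trho_nearPt (u : Fin n → ℤ) : trho n u (nearPt n c u) = hamU n c u :=
  if_pos (nearPt_close (c := c))

lemma filter_subset_of_box (hc : ∀ i, 2 ≤ c i) {u s : Fin n → ℤ}
    (hs : s ∈ boxSet n c (zIndex n c u)) :
    (Finset.univ.filter fun i => u i ≠ nearPt n c u i)
      ⊆ (Finset.univ.filter fun i => u i ≠ s i) := by
  intro i hi
  rw [Finset.mem_filter] at hi ⊢
  refine ⟨Finset.mem_univ i, fun heq => ?_⟩
  have hr := nearZ_ne_iff (Ne.symm hi.2)
  have := not_inBox_self (z := zIndex n c u i) (hc i) hr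
  rw [heq] at this
  exact this (hs i)

lemma hamU_le (u : Fin n → ℤ) : hamU n c u ≤ n := by
  unfold hamU
  calc _ ≤ Finset.univ.card := Finset.card_filter_le _ _
    _ = n := by simp

lemma nearPt_mem_codeS (hc : ∀ i, 2 ≤ c i) (u : Fin n → ℤ) :
    nearPt n c u ∈ codeS n c := ⟨_, nearPt_mem hc⟩

lemma trhoSet_codeS_eq (hc : ∀ i, 2 ≤ c i) (u : Fin n → ℤ) :
    trhoSet n u (codeS n c) = hamU n c u := by
  apply le_antisymm
  · exact Nat.sInf_le ⟨nearPt n c u, nearPt_mem_codeS hc u, trho_nearPt u⟩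
  · refine le_csInf ⟨hamU n c u, nearPt n c u, nearPt_mem_codeS hc u, trho_nearPt u⟩ ?_
    rintro d ⟨s, hsS, rfl⟩
    unfold trho
    split_ifs with h
    · exact Finset.card_le_card (filter_subset_of_box hc (close_mem_box hc hsS h))
    · have := hamU_le (c := c) u; omega

lemma exists_unique_near (hc : ∀ i, 2 ≤ c i) (u : Fin n → ℤ) :
    ∃! s, s ∈ codeS n c ∧ trho n u s = trhoSet n u (codeS n c) := by
  rw [trhoSet_codeS_eq hc]
  refine ⟨nearPt n c u, ⟨nearPt_mem_codeS hc u, trho_nearPt u⟩, ?_⟩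
  rintro s ⟨hsS, htr⟩
  have hclose : ∀ i, |u i - s i| ≤ 1 := by
    by_contra h
    rw [trho, if_neg h] at htr
    have := hamU_le (c := c) u
    omega
  rw [trho, if_pos hclose] at htr
  have hsbox := close_mem_box hc hsS hclose
  have heq := Finset.eq_of_subset_of_card_le (filter_subset_of_box hc hsbox) (le_of_eq htr)
  funext i
  by_cases hni : u i = nearPt n c u i
  · have : i ∉ Finset.univ.filter fun j => u j ≠ nearPt n c u j := by
      simp [hni]
    rw [heq] at this
    simp only [Finset.mem_filter, Finset.mem_univ, true_and, not_not] at this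
    rw [← this]; exact hni
  · exact close_eq_nearZ (hc i) (hsbox i) (hclose i) (nearZ_ne_iff (Ne.symm hni))

lemma boxSet_nonempty (hc : ∀ i, 2 ≤ c i) (z : Fin n → ℤ) :
    (fun i => z i * (c i + 1) + 1) ∈ boxSet n c z := by
  intro i
  exact ⟨le_rfl, by have := hc i; simp only []; omega⟩

lemma exists_unique_comp (hc : ∀ i, 2 ≤ c i) (u : Fin n → ℤ) :
    ∃! H : ((gridGraph n).induce (codeS n c)).ConnectedComponent,
      trhoSet n u (compVerts n (codeS n c) H) ≤ n := by
  set H₀ := ((gridGraph n).induce (codeS n c)).connectedComponentMk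
    ⟨nearPt n c u, nearPt_mem_codeS hc u⟩ with hH₀
  have hz0 : zComp hc H₀ = zIndex n c u := by
    rw [hH₀, zComp_mk hc]
    exact zIndex_nearPt hc
  refine ⟨H₀, ?_, ?_⟩
  · show trhoSet n u (compVerts n (codeS n c) H₀) ≤ n
    rw [compVerts_eq_box hc, hz0]
    calc trhoSet n u (boxSet n c (zIndex n c u))
        ≤ hamU n c u := Nat.sInf_le ⟨nearPt n c u, nearPt_mem hc, trho_nearPt u⟩
      _ ≤ n := hamU_le u
  · intro H hH
    rw [compVerts_eq_box hc] at hH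
    have hne : {d | ∃ s ∈ boxSet n c (zComp hc H), trho n u s = d}.Nonempty :=
      ⟨_, _, boxSet_nonempty hc (zComp hc H), rfl⟩
    obtain ⟨s, hsbox, hts⟩ := Nat.sInf_mem hne
    have hts' : trho n u s ≤ n := by rw [hts]; exact hH
    have hclose : ∀ i, |u i - s i| ≤ 1 := by
      by_contra h
      rw [trho, if_neg h] at hts'
      omega
    have hzz : zComp hc H = zIndex n c u := by
      funext i
      exact inBoxZ_close (hc i) (hsbox i) (hclose i)
    exact comp_eq_of_zComp hc (by rw [hzz, hz0])

end PTMC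

/-- For any integers `c i ≥ 2` there is an `n`-PTMC in `Λ_n` whose
induced components are exactly the boxes `B_z`, translates of `Π_i {0,…,c i − 2}`,
with pairwise `ℓ1`-distance at least 3 between distinct components, distance 3 attained. -/
theorem stmt_1 (n : ℕ) (hn : 1 ≤ n) (c : Fin n → ℤ) (hc : ∀ i, 2 ≤ c i) :
    ∃ S : Set (Fin n → ℤ), IsPTMC n n S ∧
      (∀ H : ((gridGraph n).induce S).ConnectedComponent, ∃ z : Fin n → ℤ,
        compVerts n S H =
          {v : Fin n → ℤ | ∀ i, z i * (c i + 1) + 1 ≤ v i ∧ v i ≤ z i * (c i + 1) + c i - 1}) ∧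
      (∀ z : Fin n → ℤ, ∃ H : ((gridGraph n).induce S).ConnectedComponent,
        compVerts n S H =
          {v : Fin n → ℤ | ∀ i, z i * (c i + 1) + 1 ≤ v i ∧ v i ≤ z i * (c i + 1) + c i - 1}) ∧
      (∀ H H' : ((gridGraph n).induce S).ConnectedComponent, H ≠ H' →
        ∀ a ∈ compVerts n S H, ∀ b ∈ compVerts n S H', 3 ≤ ∑ i, |a i - b i|) ∧
      (∃ H H' : ((gridGraph n).induce S).ConnectedComponent, H ≠ H' ∧
        ∃ a ∈ compVerts n S H, ∃ b ∈ compVerts n S H', ∑ i, |a i - b i| = 3) := by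
  classical
  refine ⟨codeS n c, ⟨fun u => exists_unique_near hc u, fun u => exists_unique_comp hc u⟩,
    ?_, ?_, ?_, ?_⟩
  · -- every component is a box
    intro H
    exact ⟨zComp hc H, compVerts_eq_box hc H⟩
  · -- every box is a component
    intro z
    have hbase := boxSet_nonempty hc z
    refine ⟨((gridGraph n).induce (codeS n c)).connectedComponentMk
      ⟨_, ⟨z, hbase⟩⟩, ?_⟩
    rw [compVerts_eq_box hc, zComp_mk hc, ← zIndex_eq hc hbase]
    rfl
  · -- distance at least 3
    intro H H' hne a ha b hb
    rw [compVerts_eq_box hc] at ha hb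
    have hzz : zComp hc H ≠ zComp hc H' := fun h => hne (comp_eq_of_zComp hc h)
    exact box_gap hc ha hb hzz
  · -- distance 3 attained
    set i₀ : Fin n := ⟨0, hn⟩ with hi₀
    set a : Fin n → ℤ := fun i => if i = i₀ then c i - 1 else 1 with hadef
    set b : Fin n → ℤ := fun i => if i = i₀ then c i + 2 else 1 with hbdef
    set z₀ : Fin n → ℤ := fun _ => 0 with hz₀def
    set z' : Fin n → ℤ := fun i => if i = i₀ then 1 else 0 with hz'def
    have ha : a ∈ boxSet n c z₀ := by
      intro i
      have := hc i
      constructor <;> · simp only [hadef, hz₀def]; split_ifs <;> omega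
    have hb : b ∈ boxSet n c z' := by
      intro i
      have := hc i
      constructor <;> · simp only [hbdef, hz'def]; split_ifs <;> nlinarith
    refine ⟨((gridGraph n).induce (codeS n c)).connectedComponentMk ⟨a, ⟨z₀, ha⟩⟩,
      ((gridGraph n).induce (codeS n c)).connectedComponentMk ⟨b, ⟨z', hb⟩⟩, ?_, a, ⟨⟨z₀, ha⟩, rfl⟩,
      b, ⟨⟨z', hb⟩, rfl⟩, ?_⟩
    · intro h
      have h1 : zComp hc (((gridGraph n).induce (codeS n c)).connectedComponentMk ⟨a, ⟨z₀, ha⟩⟩)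
          = z₀ := by rw [zComp_mk hc]; exact (zIndex_eq hc ha).symm
      have h2 : zComp hc (((gridGraph n).induce (codeS n c)).connectedComponentMk ⟨b, ⟨z', hb⟩⟩)
          = z' := by rw [zComp_mk hc]; exact (zIndex_eq hc hb).symm
      rw [h] at h1
      rw [h1] at h2
      have := congrFun h2 i₀
      simp [hz₀def, hz'def] at this
    · rw [Finset.sum_eq_single_of_mem i₀ (Finset.mem_univ i₀)]
      · simp only [hadef, hbdef, if_pos rfl]
        rw [show c i₀ - 1 - (c i₀ + 2) = -3 by ring]
        norm_num
      · intro j _ hj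
        simp [hadef, hbdef, if_neg hj]
end

section
/- There exists a set S ⊆ ℤ³ such that: (a) S is a 1-PTMC in Λ_3; in particular S is a perfect dominating set of Λ_3, i.e. every vertex of ℤ³ not in S is adjacent in Λ_3 to exactly one vertex of S; (b) S is invariant under the translations v ↦ v + 6e_1, v ↦ v + 6e_2 and v ↦ v + 3e_3; (c) every connected component of the subgraph of Λ_3 induced by S is either a single vertex or a 4-cycle, all the 4-cycle components being translates of one another (each a translate of a unit square spanned by two coordinate directions), and components of both kinds occur; (d) any two distinct components are at ℓ1-distance at least 3. -/
set_option maxHeartbeats 4000000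
set_option maxRecDepth 1000000

namespace Stmt2

abbrev Rt : Type := ZMod 6 × ZMod 6 × ZMod 3

def res (v : Fin 3 → ℤ) : Rt := ((v 0 : ZMod 6), (v 1 : ZMod 6), (v 2 : ZMod 3))

def SL : List Rt := [(0,0,0),(0,1,0),(0,3,1),(0,4,1),(1,0,0),(1,1,0),(1,3,1),(1,4,1),
  (2,2,2),(2,5,2),(3,0,1),(3,1,1),(3,3,0),(3,4,0),(4,0,1),(4,1,1),(4,3,0),(4,4,0),
  (5,2,2),(5,5,2)]

def Sc : Set (Fin 3 → ℤ) := {v | res v ∈ SL}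

def E0 : Fin 3 → ℤ := ![1,0,0]
def E1 : Fin 3 → ℤ := ![0,1,0]

def L10 : List Rt := [(1,0,0),(1,3,1),(4,0,1),(4,3,0)]
def L01 : List Rt := [(0,1,0),(0,4,1),(3,1,1),(3,4,0)]
def L11 : List Rt := [(1,1,0),(1,4,1),(4,1,1),(4,4,0)]

def da (r : Rt) : Fin 3 → ℤ :=
  if r ∈ L10 then -E0 else if r ∈ L01 then -E1 else if r ∈ L11 then -E0 + -E1 else 0

def anchor (v : Fin 3 → ℤ) : Fin 3 → ℤ := v + da (res v)

abbrev I3 := Fin 3 → Fin 3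
abbrev I5 := Fin 3 → Fin 5

def vec3 (d : I3) : Fin 3 → ℤ := fun i => (d i : ℤ) - 1
def vec5 (d : I5) : Fin 3 → ℤ := fun i => (d i : ℤ) - 2

def wt (d : I3) : ℕ := (Finset.univ.filter fun i => vec3 d i ≠ 0).card
def l1 (d : I5) : ℕ := ∑ i, (vec5 d i).natAbs

/-! ### Finite checks -/

lemma chk_da : ∀ r : Rt, da r = 0 ∨ da r = -E0 ∨ da r = -E1 ∨ da r = -E0 + -E1 := by decide

lemma chk_one_ex : ∀ r : Rt, ∃ d : I3, wt d ≤ 1 ∧ (r + res (vec3 d)) ∈ SL := by decide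

lemma chk_one_agree : ∀ r : Rt, ∀ d d' : I3, wt d ≤ 1 → wt d' ≤ 1 →
    (r + res (vec3 d)) ∈ SL → (r + res (vec3 d')) ∈ SL →
      vec3 d + da (r + res (vec3 d)) = vec3 d' + da (r + res (vec3 d')) := by decide

lemma chk_min : ∀ r : Rt, ∃ d : I3, (r + res (vec3 d)) ∈ SL ∧
    ∀ d' : I3, (r + res (vec3 d')) ∈ SL → wt d ≤ wt d' ∧ (wt d' = wt d → d' = d) := by decide

lemma chk_adj : ∀ r : Rt, r ∈ SL → ∀ d : I3, wt d = 1 → (r + res (vec3 d)) ∈ SL →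
    da (r + res (vec3 d)) = da r - vec3 d := by decide

lemma chk_anch : ∀ r : Rt, r ∈ SL → (r + res (da r)) ∈ SL ∧ da (r + res (da r)) = 0 ∧
    (da r = -E0 + -E1 → (r + res (-E0)) ∈ SL) := by decide

lemma chk_class : ∀ r : Rt, r ∈ SL → da r = 0 →
    (((r + res E0) ∈ SL ∧ da (r + res E0) = -E0) ∧
     ((r + res E1) ∈ SL ∧ da (r + res E1) = -E1) ∧
     ((r + res (E0+E1)) ∈ SL ∧ da (r + res (E0+E1)) = -E0 + -E1)) ∨
    (¬((r + res E0) ∈ SL ∧ da (r + res E0) = -E0) ∧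
     ¬((r + res E1) ∈ SL ∧ da (r + res E1) = -E1) ∧
     ¬((r + res (E0+E1)) ∈ SL ∧ da (r + res (E0+E1)) = -E0 + -E1)) := by decide

lemma chk_far : ∀ r : Rt, r ∈ SL → ∀ d : I5, 1 ≤ l1 d → l1 d ≤ 2 →
    (r + res (vec5 d)) ∈ SL → vec5 d + da (r + res (vec5 d)) = da r := by decide

lemma chk_dom : ∀ r : Rt, r ∉ SL → ∃ d : I3, (wt d = 1 ∧ (r + res (vec3 d)) ∈ SL) ∧
    ∀ d' : I3, wt d' = 1 → (r + res (vec3 d')) ∈ SL → d' = d := by decide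

lemma chk_wt3 : ∀ d : I3, wt d ≤ 3 := by decide

lemma chk_wtcast : ∀ d : I3, (wt d : ℤ) = ∑ i, |vec3 d i| := by decide

lemma chk_l1cast : ∀ d : I5, (l1 d : ℤ) = ∑ i, |vec5 d i| := by decide

lemma chk_sumE0 : ∑ i, |(-E0) i| = 1 := by decide
lemma chk_sumE1 : ∑ i, |(-E1) i| = 1 := by decide


/-! ### Basic lemmas -/

lemma mem_Sc {v : Fin 3 → ℤ} : v ∈ Sc ↔ res v ∈ SL := Iff.rfl

lemma res_add (u v : Fin 3 → ℤ) : res (u + v) = res u + res v := by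
  simp [res, Prod.ext_iff, Pi.add_apply]

lemma exists_i3 (δ : Fin 3 → ℤ) (h : ∀ i, |δ i| ≤ 1) : ∃ d : I3, vec3 d = δ := by
  refine ⟨fun i => ⟨(δ i + 1).toNat, ?_⟩, funext fun i => ?_⟩
  · have := abs_le.mp (h i); omega
  · have := abs_le.mp (h i)
    simp only [vec3]
    omega

lemma exists_i5 (δ : Fin 3 → ℤ) (h : ∀ i, |δ i| ≤ 2) : ∃ d : I5, vec5 d = δ := by
  refine ⟨fun i => ⟨(δ i + 2).toNat, ?_⟩, funext fun i => ?_⟩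
  · have := abs_le.mp (h i); omega
  · have := abs_le.mp (h i)
    simp only [vec5]
    omega

lemma trho_shift (u δ : Fin 3 → ℤ) (h : ∀ i, |δ i| ≤ 1) :
    trho 3 u (u + δ) = (Finset.univ.filter fun i => δ i ≠ 0).card := by
  unfold trho
  rw [if_pos]
  · congr 1
    apply Finset.filter_congr
    intro i _
    simp [Pi.add_apply]
  · intro i
    have : u i - (u + δ) i = -δ i := by simp [Pi.add_apply]
    rw [this, abs_neg]
    exact h i

lemma trho_vec3 (u : Fin 3 → ℤ) (d : I3) : trho 3 u (u + vec3 d) = wt d := by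
  apply trho_shift
  intro i
  simp only [vec3]
  have : (d i : ℤ) < 3 := by exact_mod_cast d i |>.isLt
  have : (0:ℤ) ≤ (d i : ℤ) := Int.ofNat_nonneg _
  rw [abs_le]; omega

lemma trho_le_three (u s : Fin 3 → ℤ) (h : trho 3 u s ≤ 3) : ∀ i, |u i - s i| ≤ 1 := by
  by_contra hc
  push_neg at hc
  have : trho 3 u s = 4 := by
    unfold trho
    rw [if_neg]
    push_neg
    obtain ⟨i, hi⟩ := hc
    exact ⟨i, hi⟩
  omega

lemma cube_of_trho_le (u s : Fin 3 → ℤ) (h : trho 3 u s ≤ 3) :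
    ∃ d : I3, s = u + vec3 d ∧ trho 3 u s = wt d := by
  have hc := trho_le_three u s h
  obtain ⟨d, hd⟩ := exists_i3 (s - u) (fun i => by
    have := hc i
    rw [abs_sub_comm] at this
    simpa [Pi.sub_apply] using this)
  have hs : s = u + vec3 d := by rw [hd]; abel
  exact ⟨d, hs, by rw [hs, trho_vec3]⟩

lemma grid_adj_shift (x δ : Fin 3 → ℤ) (h : ∑ i, |δ i| = 1) : (gridGraph 3).Adj x (x + δ) := by
  show ∑ i, |x i - (x + δ) i| = 1
  rw [Finset.sum_congr rfl fun i _ => by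
    rw [show x i - (x + δ) i = -δ i by simp [Pi.add_apply], abs_neg]]
  exact h

lemma adj_delta {x y : Fin 3 → ℤ} (h : (gridGraph 3).Adj x y) :
    ∃ d : I3, y = x + vec3 d ∧ wt d = 1 := by
  have hsum : ∑ i, |x i - y i| = 1 := h
  have hle : ∀ i, |y i - x i| ≤ 1 := by
    intro i
    rw [abs_sub_comm]
    have h1 : |x i - y i| ≤ ∑ j, |x j - y j| :=
      Finset.single_le_sum (f := fun j => |x j - y j|) (fun j _ => abs_nonneg _) (Finset.mem_univ i)
    exact hsum ▸ h1
  obtain ⟨d, hd⟩ := exists_i3 (y - x) (fun i => by simpa [Pi.sub_apply] using hle i)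
  have hy : y = x + vec3 d := by rw [hd]; abel
  refine ⟨d, hy, ?_⟩
  have : (wt d : ℤ) = 1 := by
    rw [chk_wtcast d, hd]
    rw [Finset.sum_congr rfl fun i _ => by rw [show (y - x) i = -(x i - y i) from by rw [Pi.sub_apply]; ring, abs_neg]]
    exact hsum
  exact_mod_cast this

/-! ### Anchor and components -/

lemma anchor_adj {x y : Fin 3 → ℤ} (hx : x ∈ Sc) (hy : y ∈ Sc)
    (h : (gridGraph 3).Adj x y) : anchor y = anchor x := by
  obtain ⟨d, rfl, hw⟩ := adj_delta h
  have hmem : (res x + res (vec3 d)) ∈ SL := by rw [← res_add]; exact hy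
  have hda := chk_adj (res x) hx d hw hmem
  unfold anchor
  rw [res_add, hda]
  abel

lemma ind_adj {x y : Fin 3 → ℤ} (hx : x ∈ Sc) (hy : y ∈ Sc)
    (h : (gridGraph 3).Adj x y) : ((gridGraph 3).induce Sc).Adj ⟨x, hx⟩ ⟨y, hy⟩ := by
  simpa using h

lemma ind_adj' {x y : ↥Sc} (h : ((gridGraph 3).induce Sc).Adj x y) :
    (gridGraph 3).Adj x.1 y.1 := by
  simpa using h

lemma anchor_comp_const {x y : ↥Sc} (h : ((gridGraph 3).induce Sc).Reachable x y) :
    anchor x.1 = anchor y.1 := by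
  obtain ⟨p⟩ := h
  induction p with
  | nil => rfl
  | cons hadj p ih => exact ((anchor_adj (Subtype.prop _) (Subtype.prop _) (ind_adj' hadj)).symm.trans ih)

lemma reach_of_val_eq {a b : ↥Sc} (h : a.1 = b.1) :
    ((gridGraph 3).induce Sc).Reachable a b := by
  cases Subtype.ext h
  rfl

lemma reach_anchor {v : Fin 3 → ℤ} (hv : v ∈ Sc) :
    ∃ hw : anchor v ∈ Sc,
      ((gridGraph 3).induce Sc).Reachable ⟨v, hv⟩ ⟨anchor v, hw⟩ := by
  obtain ⟨hmem, hda0, hmid⟩ := chk_anch (res v) hv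
  have hw : anchor v ∈ Sc := by
    rw [mem_Sc]
    unfold anchor
    rw [res_add]
    exact hmem
  refine ⟨hw, ?_⟩
  rcases chk_da (res v) with h | h | h | h
  · apply reach_of_val_eq
    show v = anchor v
    unfold anchor
    rw [h, add_zero]
  · have he : anchor v = v + -E0 := by unfold anchor; rw [h]
    have : ((gridGraph 3).induce Sc).Adj ⟨v, hv⟩ ⟨anchor v, hw⟩ := by
      have := grid_adj_shift v (-E0) chk_sumE0
      have hee : (⟨anchor v, hw⟩ : ↥Sc) = ⟨v + -E0, by rw [← he]; exact hw⟩ := Subtype.ext he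
      rw [hee]
      exact ind_adj hv _ this
    exact this.reachable
  · have he : anchor v = v + -E1 := by unfold anchor; rw [h]
    have : ((gridGraph 3).induce Sc).Adj ⟨v, hv⟩ ⟨anchor v, hw⟩ := by
      have := grid_adj_shift v (-E1) chk_sumE1
      have hee : (⟨anchor v, hw⟩ : ↥Sc) = ⟨v + -E1, by rw [← he]; exact hw⟩ := Subtype.ext he
      rw [hee]
      exact ind_adj hv _ this
    exact this.reachable
  · have hm : v + -E0 ∈ Sc := by
      rw [mem_Sc, res_add]
      exact hmid h
    have he : anchor v = (v + -E0) + -E1 := by unfold anchor; rw [h]; abel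
    have r1 : ((gridGraph 3).induce Sc).Reachable ⟨v, hv⟩ ⟨v + -E0, hm⟩ :=
      (ind_adj hv hm (grid_adj_shift v (-E0) chk_sumE0)).reachable
    have r2 : ((gridGraph 3).induce Sc).Reachable ⟨v + -E0, hm⟩ ⟨anchor v, hw⟩ := by
      have hee : (⟨anchor v, hw⟩ : ↥Sc) = ⟨(v + -E0) + -E1, by rw [← he]; exact hw⟩ :=
        Subtype.ext he
      rw [hee]
      exact (ind_adj hm _ (grid_adj_shift (v + -E0) (-E1) chk_sumE1)).reachable
    exact r1.trans r2

lemma same_anchor_reach {v w : Fin 3 → ℤ} (hv : v ∈ Sc) (hw : w ∈ Sc)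
    (h : anchor v = anchor w) : ((gridGraph 3).induce Sc).Reachable ⟨v, hv⟩ ⟨w, hw⟩ := by
  obtain ⟨ha, r1⟩ := reach_anchor hv
  obtain ⟨hb, r2⟩ := reach_anchor hw
  exact r1.trans ((reach_of_val_eq (h : _)).trans r2.symm)

lemma compVerts_mk {v : Fin 3 → ℤ} (hv : v ∈ Sc) :
    compVerts 3 Sc (((gridGraph 3).induce Sc).connectedComponentMk ⟨v, hv⟩) =
      {y | ∃ _ : y ∈ Sc, anchor y = anchor v} := by
  ext y
  constructor
  · rintro ⟨hy, hc⟩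
    exact ⟨hy, anchor_comp_const ((SimpleGraph.ConnectedComponent.eq).mp hc)⟩
  · rintro ⟨hy, hc⟩
    exact ⟨hy, SimpleGraph.ConnectedComponent.sound (same_anchor_reach hy hv hc)⟩

/-! ### Classification of fibers -/

lemma anchor_mem_self {w : Fin 3 → ℤ} (hw : w ∈ Sc) (h0 : da (res w) = 0) : anchor w = w := by
  unfold anchor
  rw [h0, add_zero]

lemma fiber_single {w : Fin 3 → ℤ} (hw : w ∈ Sc) (h0 : da (res w) = 0)
    (h1 : ¬((res w + res E0) ∈ SL ∧ da (res w + res E0) = -E0))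
    (h2 : ¬((res w + res E1) ∈ SL ∧ da (res w + res E1) = -E1))
    (h3 : ¬((res w + res (E0+E1)) ∈ SL ∧ da (res w + res (E0+E1)) = -E0 + -E1)) :
    {y | ∃ _ : y ∈ Sc, anchor y = w} = {w} := by
  ext y
  simp only [Set.mem_setOf_eq, Set.mem_singleton_iff]
  constructor
  · rintro ⟨hy, ha⟩
    have hy' : y = w - da (res y) := by rw [← ha]; unfold anchor; abel
    rcases chk_da (res y) with h | h | h | h
    · rw [hy', h, sub_zero]
    · exfalso
      apply h1
      have hyw : y = w + E0 := by rw [hy', h]; abel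
      have hres : res y = res w + res E0 := by rw [hyw, res_add]
      exact ⟨hres ▸ hy, hres ▸ h⟩
    · exfalso
      apply h2
      have hyw : y = w + E1 := by rw [hy', h]; abel
      have hres : res y = res w + res E1 := by rw [hyw, res_add]
      exact ⟨hres ▸ hy, hres ▸ h⟩
    · exfalso
      apply h3
      have hyw : y = w + (E0 + E1) := by rw [hy', h]; abel
      have hres : res y = res w + res (E0 + E1) := by rw [hyw, res_add]
      exact ⟨hres ▸ hy, hres ▸ h⟩
  · rintro rfl
    exact ⟨hw, anchor_mem_self hw h0⟩

lemma fiber_square {w : Fin 3 → ℤ} (hw : w ∈ Sc) (h0 : da (res w) = 0)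
    (h1 : (res w + res E0) ∈ SL ∧ da (res w + res E0) = -E0)
    (h2 : (res w + res E1) ∈ SL ∧ da (res w + res E1) = -E1)
    (h3 : (res w + res (E0+E1)) ∈ SL ∧ da (res w + res (E0+E1)) = -E0 + -E1) :
    {y | ∃ _ : y ∈ Sc, anchor y = w} = {w, w + E0, w + E1, w + E0 + E1} := by
  ext y
  simp only [Set.mem_setOf_eq, Set.mem_insert_iff, Set.mem_singleton_iff]
  constructor
  · rintro ⟨hy, ha⟩
    have hy' : y = w - da (res y) := by rw [← ha]; unfold anchor; abel
    rcases chk_da (res y) with h | h | h | h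
    · left; rw [hy', h, sub_zero]
    · right; left; rw [hy', h]; abel
    · right; right; left; rw [hy', h]; abel
    · right; right; right; rw [hy', h]; abel
  · rintro (rfl | rfl | rfl | rfl)
    · exact ⟨hw, anchor_mem_self hw h0⟩
    · refine ⟨by rw [mem_Sc, res_add]; exact h1.1, ?_⟩
      unfold anchor
      rw [res_add, h1.2]
      abel
    · refine ⟨by rw [mem_Sc, res_add]; exact h2.1, ?_⟩
      unfold anchor
      rw [res_add, h2.2]
      abel
    · refine ⟨by rw [mem_Sc, show res (w + E0 + E1) = res w + res (E0 + E1) from by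
        rw [show w + E0 + E1 = w + (E0 + E1) from by abel, res_add]]; exact h3.1, ?_⟩
      unfold anchor
      rw [show w + E0 + E1 = w + (E0 + E1) from by abel, res_add, h3.2]
      abel

/-! ### Main parts -/

lemma part_i (u : Fin 3 → ℤ) : ∃! s, s ∈ Sc ∧ trho 3 u s = trhoSet 3 u Sc := by
  obtain ⟨d₀, hmem, hmin⟩ := chk_min (res u)
  have hs₀ : u + vec3 d₀ ∈ Sc := by rw [mem_Sc, res_add]; exact hmem
  have ht₀ : trho 3 u (u + vec3 d₀) = wt d₀ := trho_vec3 u d₀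
  have hset : trhoSet 3 u Sc = wt d₀ := by
    unfold trhoSet
    apply le_antisymm
    · exact Nat.sInf_le ⟨u + vec3 d₀, hs₀, ht₀⟩
    · apply le_csInf
      · exact ⟨wt d₀, ⟨u + vec3 d₀, hs₀, ht₀⟩⟩
      rintro b ⟨s, hs, rfl⟩
      by_cases hb : trho 3 u s ≤ 3
      · obtain ⟨d, hsd, htd⟩ := cube_of_trho_le u s hb
        have hmd : (res u + res (vec3 d)) ∈ SL := by rw [← res_add, ← hsd]; exact hs
        rw [htd]
        exact (hmin d hmd).1
      · have h3 : wt d₀ ≤ 3 := chk_wt3 d₀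
        omega
  refine ⟨u + vec3 d₀, ⟨hs₀, by rw [ht₀, hset]⟩, ?_⟩
  rintro y ⟨hy, hty⟩
  rw [hset] at hty
  have hy3 : trho 3 u y ≤ 3 := by rw [hty]; exact chk_wt3 d₀
  obtain ⟨d, hyd, htd⟩ := cube_of_trho_le u y hy3
  have hmemd : (res u + res (vec3 d)) ∈ SL := by rw [← res_add, ← hyd]; exact hy
  have hdd : d = d₀ := (hmin d hmemd).2 (by omega)
  rw [hyd, hdd]

lemma part_ii (u : Fin 3 → ℤ) :
    ∃! H : ((gridGraph 3).induce Sc).ConnectedComponent,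
      trhoSet 3 u (compVerts 3 Sc H) ≤ 1 := by
  obtain ⟨d₀, hw₀, hm₀⟩ := chk_one_ex (res u)
  have hs₀ : u + vec3 d₀ ∈ Sc := by rw [mem_Sc, res_add]; exact hm₀
  refine ⟨((gridGraph 3).induce Sc).connectedComponentMk ⟨u + vec3 d₀, hs₀⟩, ?_, ?_⟩
  · have h1 : trhoSet 3 u (compVerts 3 Sc
        (((gridGraph 3).induce Sc).connectedComponentMk ⟨u + vec3 d₀, hs₀⟩))
        ≤ trho 3 u (u + vec3 d₀) := by
      unfold trhoSet
      exact Nat.sInf_le ⟨u + vec3 d₀, ⟨hs₀, rfl⟩, rfl⟩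
    rw [trho_vec3 u d₀] at h1
    exact le_trans h1 hw₀
  · intro H hH
    obtain ⟨x, hx0⟩ := H.exists_rep
    have hx : ((gridGraph 3).induce Sc).connectedComponentMk x = H := hx0
    have hne : {d | ∃ s ∈ compVerts 3 Sc H,
        trho 3 u s = d}.Nonempty := ⟨trho 3 u x.1, x.1, ⟨x.2, hx⟩, rfl⟩
    obtain ⟨s, hsH, hts⟩ := Nat.sInf_mem hne
    unfold trhoSet at hH
    have hts1 : trho 3 u s ≤ 1 := by rw [hts]; exact hH
    obtain ⟨hsS, hcomp⟩ := hsH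
    obtain ⟨d, hsd, htd⟩ := cube_of_trho_le u s (by omega)
    have hwd : wt d ≤ 1 := by omega
    have hmemd : (res u + res (vec3 d)) ∈ SL := by rw [← res_add, ← hsd]; exact hsS
    have hagree := chk_one_agree (res u) d d₀ hwd hw₀ hmemd hm₀
    have hanch : anchor s = anchor (u + vec3 d₀) := by
      rw [hsd]
      unfold anchor
      rw [res_add, res_add]
      rw [show u + vec3 d + da (res u + res (vec3 d))
            = u + (vec3 d + da (res u + res (vec3 d))) from by abel,
          show u + vec3 d₀ + da (res u + res (vec3 d₀))
            = u + (vec3 d₀ + da (res u + res (vec3 d₀))) from by abel, hagree]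
    rw [← hx]
    exact (hcomp.trans hx.symm).symm.trans
      (SimpleGraph.ConnectedComponent.sound (same_anchor_reach hsS hs₀ hanch))

lemma dom (v : Fin 3 → ℤ) (hv : v ∉ Sc) : ∃! s, s ∈ Sc ∧ (gridGraph 3).Adj v s := by
  obtain ⟨d₀, ⟨hw₀, hm₀⟩, huniq⟩ := chk_dom (res v) hv
  have hs₀ : v + vec3 d₀ ∈ Sc := by rw [mem_Sc, res_add]; exact hm₀
  have hadj : (gridGraph 3).Adj v (v + vec3 d₀) := by
    apply grid_adj_shift
    have h := chk_wtcast d₀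
    rw [hw₀] at h
    exact_mod_cast h.symm
  refine ⟨v + vec3 d₀, ⟨hs₀, hadj⟩, ?_⟩
  rintro y ⟨hy, hyadj⟩
  obtain ⟨d, rfl, hwd⟩ := adj_delta hyadj
  have hmemd : (res v + res (vec3 d)) ∈ SL := by rw [← res_add]; exact hy
  rw [huniq d hwd hmemd]

lemma res_zero_shift {c : Fin 3 → ℤ} (hc : res c = 0) (v : Fin 3 → ℤ) :
    v ∈ Sc ↔ v + c ∈ Sc := by
  rw [mem_Sc, mem_Sc, res_add, hc, add_zero]

lemma trans0 : res ((6:ℤ) • Pi.single (0:Fin 3) (1:ℤ)) = 0 := by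
  have h : (6:ℤ) • Pi.single (0:Fin 3) (1:ℤ) = (![6,0,0] : Fin 3 → ℤ) := by
    funext i; fin_cases i <;> simp [Pi.single_apply]
  rw [h]; decide

lemma trans1 : res ((6:ℤ) • Pi.single (1:Fin 3) (1:ℤ)) = 0 := by
  have h : (6:ℤ) • Pi.single (1:Fin 3) (1:ℤ) = (![0,6,0] : Fin 3 → ℤ) := by
    funext i; fin_cases i <;> simp [Pi.single_apply]
  rw [h]; decide

lemma trans2 : res ((3:ℤ) • Pi.single (2:Fin 3) (1:ℤ)) = 0 := by
  have h : (3:ℤ) • Pi.single (2:Fin 3) (1:ℤ) = (![0,0,3] : Fin 3 → ℤ) := by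
    funext i; fin_cases i <;> simp [Pi.single_apply]
  rw [h]; decide

lemma hE0 : Pi.single (0:Fin 3) (1:ℤ) = E0 := by
  funext i; fin_cases i <;> simp [Pi.single_apply, E0]

lemma hE1 : Pi.single (1:Fin 3) (1:ℤ) = E1 := by
  funext i; fin_cases i <;> simp [Pi.single_apply, E1]

lemma compVerts_mk' (x : ↥Sc) :
    compVerts 3 Sc (((gridGraph 3).induce Sc).connectedComponentMk x) =
      {y | ∃ _ : y ∈ Sc, anchor y = anchor x.1} := by
  obtain ⟨v, hv⟩ := x
  exact compVerts_mk hv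

lemma anchor_props {v : Fin 3 → ℤ} (hv : v ∈ Sc) :
    anchor v ∈ Sc ∧ da (res (anchor v)) = 0 := by
  obtain ⟨h1, h2, _⟩ := chk_anch (res v) hv
  constructor
  · rw [mem_Sc]; unfold anchor; rw [res_add]; exact h1
  · unfold anchor; rw [res_add]; exact h2

lemma classify (H : ((gridGraph 3).induce Sc).ConnectedComponent) :
    (∃ v, compVerts 3 Sc H = {v}) ∨
    (∃ w : Fin 3 → ℤ, compVerts 3 Sc H = {w, w + E0, w + E1, w + E0 + E1}) := by
  obtain ⟨x, hx0⟩ := H.exists_rep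
  have hx : ((gridGraph 3).induce Sc).connectedComponentMk x = H := hx0
  rw [← hx, compVerts_mk' x]
  obtain ⟨hw, h0⟩ := anchor_props x.2
  rcases chk_class (res (anchor x.1)) hw h0 with ⟨h1, h2, h3⟩ | ⟨h1, h2, h3⟩
  · exact Or.inr ⟨anchor x.1, fiber_square hw h0 h1 h2 h3⟩
  · exact Or.inl ⟨anchor x.1, fiber_single hw h0 h1 h2 h3⟩

lemma clause_d (H H' : ((gridGraph 3).induce Sc).ConnectedComponent) (hne : H ≠ H')
    (a : Fin 3 → ℤ) (ha : a ∈ compVerts 3 Sc H) (b : Fin 3 → ℤ)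
    (hb : b ∈ compVerts 3 Sc H') : 3 ≤ ∑ i, |a i - b i| := by
  by_contra hlt
  push_neg at hlt
  obtain ⟨haS, hacomp⟩ := ha
  obtain ⟨hbS, hbcomp⟩ := hb
  have hsum : ∑ i, |a i - b i| ≤ 2 := by linarith
  by_cases h0 : b = a
  · apply hne
    rw [← hacomp, ← hbcomp]
    congr 1
    exact Subtype.ext h0.symm
  · have hle : ∀ i, |b i - a i| ≤ 2 := fun i => by
      rw [abs_sub_comm]
      have h1 : |a i - b i| ≤ ∑ j, |a j - b j| :=
        Finset.single_le_sum (f := fun j => |a j - b j|) (fun j _ => abs_nonneg _)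
          (Finset.mem_univ i)
      linarith
    obtain ⟨d, hd⟩ := exists_i5 (b - a) (fun i => by simpa [Pi.sub_apply] using hle i)
    have hb' : b = a + vec5 d := by rw [hd]; abel
    have hsum' : ∑ i, |vec5 d i| = ∑ i, |a i - b i| := by
      apply Finset.sum_congr rfl
      intro i _
      rw [hd, show (b - a) i = -(a i - b i) from by rw [Pi.sub_apply]; ring, abs_neg]
    have hl1_le : l1 d ≤ 2 := by
      have h2 : (l1 d : ℤ) ≤ 2 := by rw [chk_l1cast d, hsum']; exact hsum
      exact_mod_cast h2
    have hl1_ge : 1 ≤ l1 d := by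
      rcases Nat.eq_zero_or_pos (l1 d) with h | h
      · exfalso
        apply h0
        have hz : ∀ i, vec5 d i = 0 := by
          intro i
          have := Finset.sum_eq_zero_iff_of_nonneg
            (fun j (_ : j ∈ Finset.univ) => Nat.zero_le ((vec5 d j).natAbs)) |>.mp h i
            (Finset.mem_univ i)
          exact Int.natAbs_eq_zero.mp this
        funext i
        have : (b - a) i = 0 := by rw [← hd]; exact hz i
        rw [Pi.sub_apply] at this
        omega
      · exact h
    have hmem : (res a + res (vec5 d)) ∈ SL := by rw [← res_add, ← hb']; exact hbS
    have hfar := chk_far (res a) haS d hl1_ge hl1_le hmem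
    have hanch : anchor b = anchor a := by
      rw [hb']
      unfold anchor
      rw [res_add]
      rw [show a + vec5 d + da (res a + res (vec5 d))
            = a + (vec5 d + da (res a + res (vec5 d))) from by abel, hfar]
    apply hne
    rw [← hacomp, ← hbcomp]
    exact SimpleGraph.ConnectedComponent.sound (same_anchor_reach haS hbS hanch.symm)

/-! ### Explicit examples -/

def vSing : Fin 3 → ℤ := ![5,2,2]
def wSq : Fin 3 → ℤ := ![0,0,0]

lemma chk_vSing : res vSing ∈ SL ∧ da (res vSing) = 0 ∧
    ¬((res vSing + res E0) ∈ SL ∧ da (res vSing + res E0) = -E0) ∧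
    ¬((res vSing + res E1) ∈ SL ∧ da (res vSing + res E1) = -E1) ∧
    ¬((res vSing + res (E0+E1)) ∈ SL ∧ da (res vSing + res (E0+E1)) = -E0 + -E1) := by
  decide

lemma chk_wSq : res wSq ∈ SL ∧ da (res wSq) = 0 ∧
    ((res wSq + res E0) ∈ SL ∧ da (res wSq + res E0) = -E0) ∧
    ((res wSq + res E1) ∈ SL ∧ da (res wSq + res E1) = -E1) ∧
    ((res wSq + res (E0+E1)) ∈ SL ∧ da (res wSq + res (E0+E1)) = -E0 + -E1) := by
  decide

lemma ex_single : ∃ H : ((gridGraph 3).induce Sc).ConnectedComponent, ∃ v,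
    compVerts 3 Sc H = {v} := by
  obtain ⟨hmem, h0, h1, h2, h3⟩ := chk_vSing
  have hv : vSing ∈ Sc := hmem
  refine ⟨((gridGraph 3).induce Sc).connectedComponentMk ⟨vSing, hv⟩, vSing, ?_⟩
  rw [compVerts_mk' ⟨vSing, hv⟩]
  have hav : anchor vSing = vSing := anchor_mem_self hv h0
  rw [hav]
  exact fiber_single hv h0 h1 h2 h3

lemma ex_square : ∃ H : ((gridGraph 3).induce Sc).ConnectedComponent, ∃ w : Fin 3 → ℤ,
    compVerts 3 Sc H = {w, w + E0, w + E1, w + E0 + E1} := by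
  obtain ⟨hmem, h0, h1, h2, h3⟩ := chk_wSq
  have hw : wSq ∈ Sc := hmem
  refine ⟨((gridGraph 3).induce Sc).connectedComponentMk ⟨wSq, hw⟩, wSq, ?_⟩
  rw [compVerts_mk' ⟨wSq, hw⟩]
  have hav : anchor wSq = wSq := anchor_mem_self hw h0
  rw [hav]
  exact fiber_square hw h0 h1 h2 h3

end Stmt2

open Stmt2 in
/-- There is a `1`-PTMC `S` in `Λ_3` which is a perfect dominating set,
invariant under translation by `6e₁`, `6e₂`, `3e₃`, whose induced components are single
vertices and `4`-cycles (translates of a fixed unit square spanned by two coordinate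
directions), both kinds occurring, with `ℓ1`-distance at least 3 between distinct
components. -/
theorem stmt_2 :
    ∃ S : Set (Fin 3 → ℤ),
      IsPTMC 3 1 S ∧
      (∀ v : Fin 3 → ℤ, v ∉ S → ∃! s, s ∈ S ∧ (gridGraph 3).Adj v s) ∧
      (∀ v : Fin 3 → ℤ, v ∈ S ↔ v + (6 : ℤ) • Pi.single (0 : Fin 3) (1 : ℤ) ∈ S) ∧
      (∀ v : Fin 3 → ℤ, v ∈ S ↔ v + (6 : ℤ) • Pi.single (1 : Fin 3) (1 : ℤ) ∈ S) ∧
      (∀ v : Fin 3 → ℤ, v ∈ S ↔ v + (3 : ℤ) • Pi.single (2 : Fin 3) (1 : ℤ) ∈ S) ∧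
      (∃ i j : Fin 3, i ≠ j ∧
        (∀ H : ((gridGraph 3).induce S).ConnectedComponent,
          (∃ v, compVerts 3 S H = {v}) ∨
          (∃ w : Fin 3 → ℤ, compVerts 3 S H =
            {w, w + Pi.single i 1, w + Pi.single j 1,
              w + Pi.single i 1 + Pi.single j 1})) ∧
        (∃ H : ((gridGraph 3).induce S).ConnectedComponent, ∃ v,
          compVerts 3 S H = {v}) ∧
        (∃ H : ((gridGraph 3).induce S).ConnectedComponent, ∃ w : Fin 3 → ℤ,
          compVerts 3 S H =
            {w, w + Pi.single i 1, w + Pi.single j 1,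
              w + Pi.single i 1 + Pi.single j 1})) ∧
      (∀ H H' : ((gridGraph 3).induce S).ConnectedComponent, H ≠ H' →
        ∀ a ∈ compVerts 3 S H, ∀ b ∈ compVerts 3 S H', 3 ≤ ∑ i, |a i - b i|) := by
  refine ⟨Sc, ⟨part_i, part_ii⟩, dom, res_zero_shift trans0, res_zero_shift trans1,
    res_zero_shift trans2, ⟨0, 1, by decide, ?_, ?_, ?_⟩, clause_d⟩
  · simp only [hE0, hE1]
    exact classify
  · exact ex_single
  · simp only [hE0, hE1]
    exact ex_square
end

section
/- Let n ≥ 3 be an integer. There exists a set S ⊆ ℤ^n and an (n−1)-element subset A of the coordinate indices {1,…,n} such that, writing C = {v ∈ ℤ^n : v_i ∈ {0,1} for i ∈ A, v_j = 0 for j ∉ A} (a binary (n−1)-cube), the following hold: (a) every connected component of the subgraph of Λ_n induced by S is either a translate of C or a single vertex, and components of both kinds occur; (b) assigning to each component H the radius t_H = 1 if H is a translate of the (n−1)-cube C and t_H = n−2 if H is a singleton, the truncated spheres {u ∈ ℤ^n : ρ(u, V(H)) ≤ t_H}, over all components H, form a partition of ℤ^n; (c) for every u ∈ ℤ^n, if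 H is the unique component with ρ(u, V(H)) ≤ t_H, then there is a unique w ∈ V(H) with ρ(u,w) = ρ(u, V(H)); (d) S is periodic: there exist positive integers p_1,…,p_n with S + p_i e_i = S for all i. -/
/-- The translate by `w` of the binary cube supported on the coordinate set `A`:
coordinates in `A` take values `w i` or `w i + 1`, coordinates outside `A` are fixed. -/
def translateCube (n : ℕ) (A : Finset (Fin n)) (w : Fin n → ℤ) : Set (Fin n → ℤ) :=
  {v : Fin n → ℤ | (∀ i ∈ A, v i = w i ∨ v i = w i + 1) ∧ ∀ j ∉ A, v j = w j}

/-! ### The construction -/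

/-- cube coordinates: all but the last -/
def cubC (n : ℕ) : Finset (Fin n) := Finset.univ.filter fun i => (i : ℕ) < n - 1

def sigC (n : ℕ) (v : Fin n → ℤ) : ℤ := ∑ i ∈ cubC n, v i / 3

def inPt (n : ℕ) (v : Fin n → ℤ) : Prop := ∀ i, v i % 3 = 2

def inCube (n : ℕ) (v : Fin n → ℤ) : Prop :=
  (∀ i : Fin n, (i : ℕ) < n - 1 → v i % 3 = 0 ∨ v i % 3 = 1) ∧
  (∀ i : Fin n, ¬ (i : ℕ) < n - 1 → v i % 3 = sigC n v % 2)

def SS (n : ℕ) : Set (Fin n → ℤ) := {v | inCube n v ∨ inPt n v}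

def baseOf (n : ℕ) (v : Fin n → ℤ) : Fin n → ℤ :=
  fun i => if (i : ℕ) < n - 1 then 3 * (v i / 3) else v i

open Classical in
noncomputable def pieceOf (n : ℕ) (v : Fin n → ℤ) : Set (Fin n → ℤ) :=
  if inPt n v then {v} else translateCube n (cubC n) (baseOf n v)

lemma card_cubC (n : ℕ) (hn : 1 ≤ n) : (cubC n).card = n - 1 := by
  classical
  rw [cubC]
  rw [Finset.card_eq_of_bijective (f := fun j (hj : j < n - 1) => (⟨j, by omega⟩ : Fin n))]
  · intro i hi
    simp only [Finset.mem_filter, Finset.mem_univ, true_and] at hi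
    exact ⟨i, hi, rfl⟩
  · intro j hj
    simp only [Finset.mem_filter, Finset.mem_univ, true_and]
    exact hj
  · intro j k hj hk h
    simpa [Fin.ext_iff] using h


/-! ### trho basics -/

lemma trho_le_iff_exists {n t : ℕ} (ht : t ≤ n) {u v : Fin n → ℤ} :
    trho n u v ≤ t ↔ (∀ i, |u i - v i| ≤ 1) ∧
      (Finset.univ.filter fun i => u i ≠ v i).card ≤ t := by
  rw [trho]
  split
  · next h => simp [h]
  · next h => simp [h]; omega

lemma trho_eq_zero_iff {n : ℕ} {u v : Fin n → ℤ} : trho n u v = 0 ↔ u = v := by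
  constructor
  · intro h
    rw [trho] at h
    split at h
    · next hbox =>
      funext i
      by_contra hne
      have : i ∈ Finset.univ.filter fun i => u i ≠ v i := by simp [hne]
      have := Finset.card_pos.mpr ⟨i, this⟩
      omega
    · omega
  · rintro rfl
    rw [trho]
    simp

lemma trho_self {n : ℕ} (u : Fin n → ℤ) : trho n u u = 0 := trho_eq_zero_iff.mpr rfl

/-- lower bound by number of mod-3 disagreements -/
lemma trho_ge_mod3 {n : ℕ} (u v : Fin n → ℤ) :
    (Finset.univ.filter fun i => u i % 3 ≠ v i % 3).card ≤ trho n u v := by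
  rw [trho]
  split
  · apply Finset.card_le_card
    intro i hi
    simp only [Finset.mem_filter, Finset.mem_univ, true_and] at *
    intro h; exact hi (by rw [h])
  · calc (Finset.univ.filter fun i => u i % 3 ≠ v i % 3).card
        ≤ (Finset.univ : Finset (Fin n)).card := Finset.card_le_card (Finset.filter_subset _ _)
      _ = n := by simp
      _ ≤ n + 1 := by omega

lemma trhoSet_le {n : ℕ} {u x : Fin n → ℤ} {P : Set (Fin n → ℤ)} (hx : x ∈ P) :
    trhoSet n u P ≤ trho n u x :=
  Nat.sInf_le ⟨x, hx, rfl⟩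

lemma trhoSet_attained {n : ℕ} {u : Fin n → ℤ} {P : Set (Fin n → ℤ)} (hP : P.Nonempty) :
    ∃ x ∈ P, trho n u x = trhoSet n u P := by
  obtain ⟨y, hy⟩ := hP
  have : trhoSet n u P ∈ {d | ∃ s ∈ P, trho n u s = d} := Nat.sInf_mem ⟨_, y, hy, rfl⟩
  exact this

lemma trhoSet_singleton {n : ℕ} (u v : Fin n → ℤ) : trhoSet n u {v} = trho n u v := by
  have h1 : trhoSet n u {v} ≤ trho n u v := trhoSet_le rfl
  obtain ⟨x, hx, hx2⟩ := trhoSet_attained (u := u) (P := ({v} : Set (Fin n → ℤ))) ⟨v, rfl⟩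
  rw [Set.mem_singleton_iff] at hx
  subst hx; omega


/-! ### adjacency -/

lemma grid_adj_iff {n : ℕ} {u v : Fin n → ℤ} :
    (gridGraph n).Adj u v ↔ ∃ k, (v k = u k + 1 ∨ v k = u k - 1) ∧ ∀ i, i ≠ k → v i = u i := by
  constructor
  · intro h
    have h' : ∑ i, |u i - v i| = 1 := h
    have hnz : ∃ k, u k ≠ v k := by
      by_contra hc
      push_neg at hc
      have : ∑ i, |u i - v i| = 0 := Finset.sum_eq_zero fun i _ => by rw [hc i]; simp
      omega
    obtain ⟨k, hk⟩ := hnz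
    have hsplit : |u k - v k| + ∑ i ∈ Finset.univ.erase k, |u i - v i| = 1 := by
      rw [← Finset.add_sum_erase Finset.univ (fun i => |u i - v i|) (Finset.mem_univ k)] at h'
      exact h'
    have hpos : 1 ≤ |u k - v k| := by
      rcases abs_pos.mpr (sub_ne_zero.mpr hk) with h
      omega
    have hrest : ∑ i ∈ Finset.univ.erase k, |u i - v i| = 0 := by
      have : 0 ≤ ∑ i ∈ Finset.univ.erase k, |u i - v i| :=
        Finset.sum_nonneg fun i _ => abs_nonneg _
      omega
    have hzero : ∀ i ∈ Finset.univ.erase k, |u i - v i| = 0 :=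
      (Finset.sum_eq_zero_iff_of_nonneg fun i _ => abs_nonneg _).mp hrest
    refine ⟨k, ?_, fun i hi => ?_⟩
    · have h1 : |u k - v k| = 1 := by omega
      rcases abs_eq (by norm_num : (0:ℤ) ≤ 1) |>.mp h1 with h2 | h2 <;> omega
    · have := hzero i (Finset.mem_erase.mpr ⟨hi, Finset.mem_univ i⟩)
      have := abs_eq_zero.mp this
      omega
  · rintro ⟨k, hk, hrest⟩
    show ∑ i, |u i - v i| = 1
    rw [Finset.sum_eq_single k]
    · rcases hk with h | h <;> rw [h] <;> simp
    · intro i _ hi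
      rw [hrest i hi]; simp
    · intro h; exact absurd (Finset.mem_univ k) h

/-! ### structural lemmas about the code -/

lemma inCube_not_inPt {n : ℕ} (hn : 3 ≤ n) {v : Fin n → ℤ} (hv : inCube n v) : ¬ inPt n v := by
  intro hp
  have h0 : ((⟨0, by omega⟩ : Fin n) : ℕ) < n - 1 := by simp; omega
  have := hv.1 _ h0
  have := hp ⟨0, by omega⟩
  omega

lemma inCube_mod3_ne_two {n : ℕ} {v : Fin n → ℤ} (hv : inCube n v) (i : Fin n) :
    v i % 3 ≠ 2 := by
  by_cases h : (i : ℕ) < n - 1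
  · rcases hv.1 i h with h' | h' <;> omega
  · have := hv.2 i h
    have h2 : sigC n v % 2 = 0 ∨ sigC n v % 2 = 1 := by omega
    omega

lemma inPt_mem_SS {n : ℕ} {v : Fin n → ℤ} (h : inPt n v) : v ∈ SS n := Or.inr h
lemma inCube_mem_SS {n : ℕ} {v : Fin n → ℤ} (h : inCube n v) : v ∈ SS n := Or.inl h

/-- the cube of an inCube point is inside the cube part of the code,
and all its members have the same base -/
lemma mem_cube_base {n : ℕ} {v x : Fin n → ℤ} (hv : inCube n v)
    (hx : x ∈ translateCube n (cubC n) (baseOf n v)) :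
    inCube n x ∧ baseOf n x = baseOf n v := by
  obtain ⟨hA, hB⟩ := hx
  have hmem : ∀ i : Fin n, (i : ℕ) < n - 1 → i ∈ cubC n := fun i hi => by
    simp [cubC, hi]
  have hnmem : ∀ i : Fin n, ¬ (i : ℕ) < n - 1 → i ∉ cubC n := fun i hi => by
    simp [cubC, hi]
  have hcoord : ∀ i : Fin n, (i : ℕ) < n - 1 → x i / 3 = v i / 3 ∧ (x i % 3 = 0 ∨ x i % 3 = 1) := by
    intro i hi
    have := hA i (hmem i hi)
    have hb : baseOf n i = baseOf n i := rfl
    simp only [baseOf, if_pos hi] at this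
    have h3 : v i % 3 + 3 * (v i / 3) = v i := by omega
    rcases this with h | h <;> constructor <;> omega
  have hz : ∀ i : Fin n, ¬ (i : ℕ) < n - 1 → x i = v i := by
    intro i hi
    have := hB i (hnmem i hi)
    simpa [baseOf, if_neg hi] using this
  have hsig : sigC n x = sigC n v := by
    apply Finset.sum_congr rfl
    intro i hi
    simp only [cubC, Finset.mem_filter] at hi
    rw [(hcoord i hi.2).1]
  constructor
  · constructor
    · intro i hi; exact (hcoord i hi).2
    · intro i hi
      rw [hz i hi, hsig]
      exact hv.2 i hi
  · funext i
    by_cases hi : (i : ℕ) < n - 1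
    · simp only [baseOf, if_pos hi, (hcoord i hi).1]
    · simp only [baseOf, if_neg hi, hz i hi]

lemma self_mem_cube {n : ℕ} {v : Fin n → ℤ} (hv : inCube n v) :
    v ∈ translateCube n (cubC n) (baseOf n v) := by
  constructor
  · intro i hi
    simp only [cubC, Finset.mem_filter] at hi
    have := hv.1 i hi.2
    simp only [baseOf, if_pos hi.2]
    omega
  · intro i hi
    simp only [cubC, Finset.mem_filter, Finset.mem_univ, true_and] at hi
    simp [baseOf, hi]


/-! ### adjacency analysis within the code -/

/-- a point-code vertex has no neighbours in the code -/
lemma point_isolated {n : ℕ} (hn : 3 ≤ n) {v y : Fin n → ℤ} (hv : inPt n v)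
    (hy : y ∈ SS n) (hadj : (gridGraph n).Adj v y) : False := by
  obtain ⟨k, hk, hrest⟩ := grid_adj_iff.mp hadj
  rcases hy with hc | hp
  · -- y ∈ cube part : but y agrees with v on all coords except k, and v has ≥ 2
    -- cube coords ≡ 2 mod 3
    have h2 : ∃ i : Fin n, (i : ℕ) < n - 1 ∧ i ≠ k := by
      by_cases hk0 : (k : ℕ) = 0
      · exact ⟨⟨1, by omega⟩, by simp; omega, by
          intro h; rw [Fin.ext_iff] at h; simp at h; omega⟩
      · exact ⟨⟨0, by omega⟩, by simp; omega, by
          intro h; rw [Fin.ext_iff] at h; simp at h; omega⟩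
    obtain ⟨i, hi1, hi2⟩ := h2
    have := hrest i hi2
    have := hv i
    have := inCube_mod3_ne_two hc i
    omega
  · -- y ∈ point part: y k = v k ± 1 but both ≡ 2 mod 3
    have := hv k
    have := hp k
    omega

/-- a cube-code vertex's neighbours in the code lie in the same cube -/
lemma cube_adj {n : ℕ} (hn : 3 ≤ n) {v y : Fin n → ℤ} (hv : inCube n v)
    (hy : y ∈ SS n) (hadj : (gridGraph n).Adj v y) :
    inCube n y ∧ baseOf n y = baseOf n v := by
  obtain ⟨k, hk, hrest⟩ := grid_adj_iff.mp hadj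
  rcases hy with hc | hp
  · -- both cubes; show same base
    have hkA : (k : ℕ) < n - 1 := by
      by_contra hkz
      have h1 := hv.2 k hkz
      have h2 := hc.2 k hkz
      have hsig : sigC n y = sigC n v := by
        apply Finset.sum_congr rfl
        intro i hi
        simp only [cubC, Finset.mem_filter] at hi
        have : i ≠ k := by
          intro h; rw [h] at hi; omega
        rw [hrest i this]
      rw [hsig] at h2
      omega
    refine ⟨hc, ?_⟩
    have hfloor : y k / 3 = v k / 3 := by
      have h1 := hv.1 k hkA
      have h2 := hc.1 k hkA
      omega
    funext i
    by_cases hik : i = k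
    · subst hik
      simp only [baseOf, if_pos hkA, hfloor]
    · simp only [baseOf, hrest i hik]
  · exact absurd ((hadj.symm)) (fun h => point_isolated hn hp (inCube_mem_SS hv) h)

/-- elements of the cube part of the code are in S -/
lemma cube_subset_SS {n : ℕ} {v : Fin n → ℤ} (hv : inCube n v) :
    translateCube n (cubC n) (baseOf n v) ⊆ SS n := fun x hx =>
  inCube_mem_SS (mem_cube_base hv hx).1

/-! ### cube connectivity -/

lemma cube_reachable {n : ℕ} {v x : Fin n → ℤ} (hv : inCube n v)
    (hx : x ∈ translateCube n (cubC n) (baseOf n v))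
    (hvS : v ∈ SS n) (hxS : x ∈ SS n) :
    ((gridGraph n).induce (SS n)).Reachable ⟨v, hvS⟩ ⟨x, hxS⟩ := by
  classical
  -- induction on the number of differing coordinates
  suffices H : ∀ (m : ℕ) (y : Fin n → ℤ) (hy : y ∈ translateCube n (cubC n) (baseOf n v))
      (hyS : y ∈ SS n), (Finset.univ.filter fun i => y i ≠ x i).card = m →
      ((gridGraph n).induce (SS n)).Reachable ⟨y, hyS⟩ ⟨x, hxS⟩ by
    exact H _ v (self_mem_cube hv) hvS rfl
  intro m
  induction m using Nat.strong_induction_on with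
  | _ m ih =>
    intro y hy hyS hcard
    by_cases hm : m = 0
    · subst hm
      have : y = x := by
        funext i
        by_contra hne
        have : i ∈ Finset.univ.filter fun i => y i ≠ x i := by simp [hne]
        have := Finset.card_pos.mpr ⟨i, this⟩
        omega
      subst this
      rfl
    · have hne : (Finset.univ.filter fun i => y i ≠ x i).Nonempty := by
        rw [← Finset.card_pos]; omega
      obtain ⟨j, hj⟩ := hne
      simp only [Finset.mem_filter, Finset.mem_univ, true_and] at hj
      have hjA : (j : ℕ) < n - 1 := by
        by_contra hjz
        have h1 := hy.2 j (by simp [cubC, hjz])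
        have h2 := hx.2 j (by simp [cubC, hjz])
        exact hj (h1.trans h2.symm)
      have hjc : j ∈ cubC n := by simp [cubC, hjA]
      have h1 := hy.1 j hjc
      have h2 := hx.1 j hjc
      set y' := Function.update y j (x j) with hy'
      have hy'mem : y' ∈ translateCube n (cubC n) (baseOf n v) := by
        constructor
        · intro i hi
          by_cases hij : i = j
          · subst hij; simp only [hy', Function.update_self]; exact hx.1 i hi
          · simp only [hy', Function.update_of_ne hij]; exact hy.1 i hi
        · intro i hi
          have hij : i ≠ j := fun h => hi (h ▸ hjc)
          simp only [hy', Function.update_of_ne hij]; exact hy.2 i hi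
      have hy'S : y' ∈ SS n := cube_subset_SS hv hy'mem
      have hadj : (gridGraph n).Adj y y' := by
        rw [grid_adj_iff]
        refine ⟨j, ?_, fun i hij => by simp [hy', Function.update_of_ne hij]⟩
        simp only [hy', Function.update_self]
        rcases h1 with h | h <;> rcases h2 with h' | h' <;> omega
      have hcard' : (Finset.univ.filter fun i => y' i ≠ x i).card < m := by
        have hsub : (Finset.univ.filter fun i => y' i ≠ x i) ⊆
            (Finset.univ.filter fun i => y i ≠ x i).erase j := by
          intro i hi
          simp only [Finset.mem_filter, Finset.mem_univ, true_and] at hi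
          rw [Finset.mem_erase]
          constructor
          · intro h; subst h; simp [hy'] at hi
          · simp only [Finset.mem_filter, Finset.mem_univ, true_and]
            intro h
            by_cases hij : i = j
            · subst hij; simp [hy'] at hi
            · rw [hy'] at hi; rw [Function.update_of_ne hij] at hi; exact hi h
        calc (Finset.univ.filter fun i => y' i ≠ x i).card
            ≤ ((Finset.univ.filter fun i => y i ≠ x i).erase j).card := Finset.card_le_card hsub
          _ < (Finset.univ.filter fun i => y i ≠ x i).card :=
              Finset.card_erase_lt_of_mem (by simp [hj])
          _ = m := hcard
      have step : ((gridGraph n).induce (SS n)).Reachable ⟨y, hyS⟩ ⟨y', hy'S⟩ :=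
        SimpleGraph.Adj.reachable (by exact hadj)
      exact step.trans (ih _ hcard' y' hy'mem hy'S rfl)


/-! ### components -/

lemma pieceOf_pt {n : ℕ} {v : Fin n → ℤ} (h : inPt n v) : pieceOf n v = {v} := by
  simp [pieceOf, h]

lemma pieceOf_cube {n : ℕ} (hn : 3 ≤ n) {v : Fin n → ℤ} (h : inCube n v) :
    pieceOf n v = translateCube n (cubC n) (baseOf n v) := by
  simp [pieceOf, inCube_not_inPt hn h]

lemma self_mem_piece {n : ℕ} (hn : 3 ≤ n) {v : Fin n → ℤ} (hv : v ∈ SS n) :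
    v ∈ pieceOf n v := by
  rcases hv with hc | hp
  · rw [pieceOf_cube hn hc]; exact self_mem_cube hc
  · rw [pieceOf_pt hp]; rfl

lemma piece_step {n : ℕ} (hn : 3 ≤ n) {a b : Fin n → ℤ} (ha : a ∈ SS n) (hb : b ∈ SS n)
    (hadj : (gridGraph n).Adj a b) : pieceOf n a = pieceOf n b := by
  rcases ha with hc | hp
  · obtain ⟨hcb, hbase⟩ := cube_adj hn hc hb hadj
    rw [pieceOf_cube hn hc, pieceOf_cube hn hcb, hbase]
  · exact absurd hadj (fun h => point_isolated hn hp hb h)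

lemma piece_eq_of_walk {n : ℕ} (hn : 3 ≤ n) :
    ∀ (p q : ↥(SS n)) (_ : ((gridGraph n).induce (SS n)).Walk p q),
      pieceOf n p.1 = pieceOf n q.1 := by
  intro p q w
  induction w with
  | nil => rfl
  | cons hadj w ih =>
    next u v q' =>
      have hadj' : (gridGraph n).Adj u.1 v.1 := hadj
      exact (piece_step hn u.2 v.2 hadj').trans ih

lemma compVerts_eq {n : ℕ} (hn : 3 ≤ n) {r : Fin n → ℤ} (hr : r ∈ SS n) :
    compVerts n (SS n) (((gridGraph n).induce (SS n)).connectedComponentMk ⟨r, hr⟩)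
      = pieceOf n r := by
  ext x
  constructor
  · rintro ⟨hx, hmk⟩
    have hreach := (SimpleGraph.ConnectedComponent.eq).mp hmk
    obtain ⟨w⟩ := hreach
    have := piece_eq_of_walk hn _ _ w
    simp only at this
    rw [← this]
    exact self_mem_piece hn hx
  · intro hx
    rcases hr with hc | hp
    · rw [pieceOf_cube hn hc] at hx
      have hxS : x ∈ SS n := cube_subset_SS hc hx
      refine ⟨hxS, ?_⟩
      exact SimpleGraph.ConnectedComponent.sound
        ((cube_reachable hc hx (inCube_mem_SS hc) hxS).symm)
    · rw [pieceOf_pt hp] at hx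
      rw [Set.mem_singleton_iff] at hx
      subst hx
      exact ⟨inPt_mem_SS hp, rfl⟩


/-! ### decoding : point part -/

/-- number of coordinates ≡ 2 mod 3 -/
def Ncnt (n : ℕ) (u : Fin n → ℤ) : ℕ := (Finset.univ.filter fun i => u i % 3 = 2).card

/-- the nearest all-≡2 point -/
def qpt (n : ℕ) (u : Fin n → ℤ) : Fin n → ℤ := fun i => u i - ((u i - 1) % 3 - 1)

lemma qpt_inPt {n : ℕ} (u : Fin n → ℤ) : inPt n (qpt n u) := by
  intro i; simp only [qpt]; omega

lemma qpt_close {n : ℕ} (u : Fin n → ℤ) (i : Fin n) : |u i - qpt n u i| ≤ 1 := by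
  simp only [qpt]
  rw [abs_le]; omega

lemma qpt_eq_iff {n : ℕ} (u : Fin n → ℤ) (i : Fin n) : u i = qpt n u i ↔ u i % 3 = 2 := by
  simp only [qpt]; omega

lemma qpt_unique {n : ℕ} {u q' : Fin n → ℤ} (h : inPt n q') (hb : ∀ i, |u i - q' i| ≤ 1) :
    q' = qpt n u := by
  funext i
  have := h i
  have := (abs_le.mp (hb i))
  simp only [qpt]
  omega

lemma trho_qpt {n : ℕ} (u : Fin n → ℤ) : trho n u (qpt n u) = n - Ncnt n u := by
  rw [trho, if_pos (qpt_close u)]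
  have : (Finset.univ.filter fun i => u i ≠ qpt n u i)
      = (Finset.univ.filter fun i => ¬ u i % 3 = 2) := by
    apply Finset.filter_congr
    intro i _
    simp only [ne_eq, qpt_eq_iff]
  rw [this]
  have h2 : (Finset.univ.filter fun i => ¬ u i % 3 = 2)
      = Finset.univ \ (Finset.univ.filter fun i => u i % 3 = 2) :=
    Finset.filter_not _ _
  rw [h2, Finset.card_sdiff_of_subset (Finset.filter_subset _ _)]
  simp only [Finset.card_univ, Fintype.card_fin]
  rfl

/-- distance from u to any inPt point is at least n - Ncnt -/
lemma trho_pt_ge {n : ℕ} {u q : Fin n → ℤ} (h : inPt n q) :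
    n - Ncnt n u ≤ trho n u q := by
  have := trho_ge_mod3 u q
  have hsub : (Finset.univ.filter fun i => ¬ u i % 3 = 2) ⊆
      (Finset.univ.filter fun i => u i % 3 ≠ q i % 3) := by
    intro i hi
    simp only [Finset.mem_filter, Finset.mem_univ, true_and] at *
    rw [h i]; exact hi
  have hcard := Finset.card_le_card hsub
  have h2 : (Finset.univ.filter fun i => ¬ u i % 3 = 2)
      = Finset.univ \ (Finset.univ.filter fun i => u i % 3 = 2) :=
    Finset.filter_not _ _
  have h3 := Finset.card_le_univ (Finset.univ.filter fun i => u i % 3 = 2)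
  rw [h2, Finset.card_sdiff_of_subset (Finset.filter_subset _ _)] at hcard
  simp only [Finset.card_univ, Fintype.card_fin] at hcard h3
  have hE : Ncnt n u = (Finset.univ.filter fun i => u i % 3 = 2).card := rfl
  omega

/-- distance from u to any inCube point is at least Ncnt -/
lemma trho_cube_ge {n : ℕ} {u x : Fin n → ℤ} (h : inCube n x) :
    Ncnt n u ≤ trho n u x := by
  have := trho_ge_mod3 u x
  have hsub : (Finset.univ.filter fun i => u i % 3 = 2) ⊆
      (Finset.univ.filter fun i => u i % 3 ≠ x i % 3) := by
    intro i hi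
    simp only [Finset.mem_filter, Finset.mem_univ, true_and] at *
    have := inCube_mod3_ne_two h i
    omega
  have := Finset.card_le_card hsub
  rw [Ncnt]
  omega

/-! ### decoding : cube part, existence -/

lemma sig_split {n : ℕ} {j : Fin n} (hj : j ∈ cubC n) (v : Fin n → ℤ) :
    sigC n v = v j / 3 + ∑ i ∈ (cubC n).erase j, v i / 3 :=
  (Finset.add_sum_erase _ _ hj).symm

lemma cube_decode_exists {n : ℕ} (hn : 3 ≤ n) (u : Fin n → ℤ) (hN : Ncnt n u ≤ 1) :
    ∃ x, inCube n x ∧ trho n u x ≤ 1 := by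
  classical
  by_cases hA : ∀ i : Fin n, (i : ℕ) < n - 1 → u i % 3 ≠ 2
  · -- case 1 : all cube coords nondeviant; fix only the z coordinate
    set zdx : Fin n := ⟨n - 1, by omega⟩ with hz
    set pp : ℤ := sigC n u % 2 with hpp
    set zval : ℤ := u zdx - ((u zdx - pp + 1) % 3 - 1) with hzval
    set x : Fin n → ℤ := fun i => if (i : ℕ) < n - 1 then u i else zval with hx
    have hxi : ∀ i : Fin n, (i : ℕ) < n - 1 → x i = u i := fun i hi => by
      simp only [hx, if_pos hi]
    have hsig : sigC n x = sigC n u := by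
      apply Finset.sum_congr rfl
      intro i hi
      simp only [cubC, Finset.mem_filter] at hi
      rw [hxi i hi.2]
    refine ⟨x, ⟨?_, ?_⟩, ?_⟩
    · intro i hi
      rw [hxi i hi]
      have := hA i hi
      omega
    · intro i hi
      have : x i = zval := by simp only [hx, if_neg hi]
      rw [this, hsig, ← hpp]
      omega
    · rw [trho_le_iff_exists (by omega)]
      constructor
      · intro i
        by_cases hi : (i : ℕ) < n - 1
        · rw [hxi i hi]; simp
        · have hxe : x i = zval := by simp only [hx, if_neg hi]
          have hie : i = zdx := by
            rw [Fin.ext_iff]; simp only [hz]; omega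
          rw [hxe, hie, hzval, abs_le]
          omega
      · rw [Finset.card_le_one]
        intro a ha b hb
        simp only [Finset.mem_filter, Finset.mem_univ, true_and] at ha hb
        have ha' : ¬ (a : ℕ) < n - 1 := fun h => ha (by rw [hxi a h])
        have hb' : ¬ (b : ℕ) < n - 1 := fun h => hb (by rw [hxi b h])
        rw [Fin.ext_iff]; omega
  · -- case 2 : a unique deviant cube coordinate j
    push_neg at hA
    obtain ⟨j, hjlt, hj2⟩ := hA
    have hjmem : j ∈ cubC n := by simp [cubC, hjlt]
    have hjf : j ∈ Finset.univ.filter fun i => u i % 3 = 2 := by simp [hj2]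
    have hothers : ∀ i : Fin n, i ≠ j → u i % 3 ≠ 2 := by
      intro i hij h2
      have hif : i ∈ Finset.univ.filter fun i => u i % 3 = 2 := by simp [h2]
      have : (1:ℕ) < Ncnt n u := by
        rw [Ncnt]
        exact Finset.one_lt_card.mpr ⟨i, hif, j, hjf, hij⟩
      omega
    set zdx : Fin n := ⟨n - 1, by omega⟩ with hz
    have hzj : zdx ≠ j := by
      intro h
      rw [Fin.ext_iff] at h
      simp only [hz] at h
      omega
    set pz : ℤ := u zdx % 3 with hpz
    set s : ℤ := sigC n u with hs
    set xj : ℤ := if s % 2 = pz then u j - 1 else u j + 1 with hxj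
    set x : Fin n → ℤ := Function.update u j xj with hx
    have hxo : ∀ i, i ≠ j → x i = u i := fun i hij => Function.update_of_ne hij _ _
    have hxjj : x j = xj := Function.update_self _ _ _
    have hsigx : sigC n x = xj / 3 + ∑ i ∈ (cubC n).erase j, u i / 3 := by
      rw [sig_split hjmem x, hxjj]
      congr 1
      apply Finset.sum_congr rfl
      intro i hi
      rw [hxo i (Finset.ne_of_mem_erase hi)]
    have hsigu : s = u j / 3 + ∑ i ∈ (cubC n).erase j, u i / 3 := sig_split hjmem u
    refine ⟨x, ⟨?_, ?_⟩, ?_⟩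
    · intro i hi
      by_cases hij : i = j
      · subst hij
        rw [hxjj, hxj]
        split <;> omega
      · rw [hxo i hij]
        have := hothers i hij
        omega
    · intro i hi
      have hij : i ≠ j := by
        intro h; rw [h] at hi; exact hi hjlt
      rw [hxo i hij]
      have hie : i = zdx := by rw [Fin.ext_iff]; simp only [hz]; omega
      rw [hie, ← hpz]
      have hxj3 : xj / 3 = if s % 2 = pz then u j / 3 else u j / 3 + 1 := by
        rw [hxj]; split <;> omega
      have hpzr : pz = 0 ∨ pz = 1 := by
        have := hothers zdx hzj
        rw [hpz]
        omega
      rw [hsigx, hxj3]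
      split
      · next hcase => omega
      · next hcase => omega
    · rw [trho_le_iff_exists (by omega)]
      constructor
      · intro i
        by_cases hij : i = j
        · subst hij
          rw [hxjj, hxj]
          split <;> rw [abs_le] <;> omega
        · rw [hxo i hij]; simp
      · rw [Finset.card_le_one]
        intro a ha b hb
        simp only [Finset.mem_filter, Finset.mem_univ, true_and] at ha hb
        have ha' : a = j := by
          by_contra h; exact ha (by rw [hxo a h])
        have hb' : b = j := by
          by_contra h; exact hb (by rw [hxo b h])
        rw [ha', hb']


/-! ### decoding : cube part, uniqueness -/

lemma cube_close_base_eq {n : ℕ} (hn : 3 ≤ n) {u x x' : Fin n → ℤ}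
    (hx : inCube n x) (hx' : inCube n x')
    (h1 : trho n u x ≤ 1) (h2 : trho n u x' ≤ 1) :
    baseOf n x = baseOf n x' := by
  classical
  rw [trho_le_iff_exists (by omega)] at h1 h2
  obtain ⟨hbox, hcnt⟩ := h1
  obtain ⟨hbox', hcnt'⟩ := h2
  by_cases hA : ∀ i : Fin n, (i : ℕ) < n - 1 → u i % 3 ≠ 2
  · -- case A : all cube coords of u nondeviant
    have hfl : ∀ (y : Fin n → ℤ), inCube n y → (∀ i, |u i - y i| ≤ 1) →
        ∀ i : Fin n, (i : ℕ) < n - 1 → y i / 3 = u i / 3 := by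
      intro y hy hb i hi
      have := hy.1 i hi
      have := hA i hi
      have := abs_le.mp (hb i)
      omega
    have hsig : sigC n x = sigC n x' := by
      apply Finset.sum_congr rfl
      intro i hi
      simp only [cubC, Finset.mem_filter] at hi
      rw [hfl x hx hbox i hi.2, hfl x' hx' hbox' i hi.2]
    funext i
    by_cases hi : (i : ℕ) < n - 1
    · simp only [baseOf, if_pos hi, hfl x hx hbox i hi, hfl x' hx' hbox' i hi]
    · simp only [baseOf, if_neg hi]
      have e1 := hx.2 i hi
      have e2 := hx'.2 i hi
      rw [hsig] at e1
      have b1 := abs_le.mp (hbox i)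
      have b2 := abs_le.mp (hbox' i)
      have hp : sigC n x' % 2 = 0 ∨ sigC n x' % 2 = 1 := by omega
      omega
  · -- case B : a deviant cube coordinate j
    push_neg at hA
    obtain ⟨j, hjlt, hj2⟩ := hA
    have hjmem : j ∈ cubC n := by simp [cubC, hjlt]
    have hkey : ∀ (y : Fin n → ℤ), inCube n y → (∀ i, |u i - y i| ≤ 1) →
        ((Finset.univ.filter fun i => u i ≠ y i).card ≤ 1) →
        (∀ i, i ≠ j → y i = u i) ∧ (y j = u j - 1 ∨ y j = u j + 1) := by
      intro y hy hb hc
      have hyj : y j ≠ u j := by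
        intro h
        have := inCube_mod3_ne_two hy j
        rw [h] at this
        exact this hj2
      have hjf : j ∈ Finset.univ.filter fun i => u i ≠ y i := by
        simp only [Finset.mem_filter, Finset.mem_univ, true_and]
        exact fun h => hyj h.symm
      constructor
      · intro i hij
        by_contra hne
        have hif : i ∈ Finset.univ.filter fun i => u i ≠ y i := by
          simp only [Finset.mem_filter, Finset.mem_univ, true_and]
          exact fun h => hne h.symm
        exact hij (Finset.card_le_one.mp hc i hif j hjf)
      · have := abs_le.mp (hb j)
        have := inCube_mod3_ne_two hy j
        omega
    obtain ⟨ho1, hj1⟩ := hkey x hx hbox hcnt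
    obtain ⟨ho2, hj2'⟩ := hkey x' hx' hbox' hcnt'
    -- parity forces x j = x' j
    set zdx : Fin n := ⟨n - 1, by omega⟩ with hz
    have hzlt : ¬ (zdx : ℕ) < n - 1 := by simp [hz]
    have hzj : zdx ≠ j := by
      intro h; rw [Fin.ext_iff] at h; simp only [hz] at h; omega
    have hxz := hx.2 zdx hzlt
    have hx'z := hx'.2 zdx hzlt
    rw [ho1 zdx hzj] at hxz
    rw [ho2 zdx hzj] at hx'z
    have hsx := sig_split hjmem x
    have hsx' := sig_split hjmem x'
    have htails : ∑ i ∈ (cubC n).erase j, x i / 3 = ∑ i ∈ (cubC n).erase j, x' i / 3 := by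
      apply Finset.sum_congr rfl
      intro i hi
      rw [ho1 i (Finset.ne_of_mem_erase hi), ho2 i (Finset.ne_of_mem_erase hi)]
    have hjeq : x j = x' j := by
      -- floors of the two candidates differ; parity equality forces equal floors
      have hfe : x j / 3 = x' j / 3 := by omega
      omega
    funext i
    by_cases hi : (i : ℕ) < n - 1
    · simp only [baseOf, if_pos hi]
      by_cases hij : i = j
      · rw [hij, hjeq]
      · rw [ho1 i hij, ho2 i hij]
    · simp only [baseOf, if_neg hi]
      have hiz : i = zdx := by rw [Fin.ext_iff]; simp only [hz]; omega
      rw [hiz, ho1 zdx hzj, ho2 zdx hzj]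


/-! ### cubes are not singletons -/

lemma cube_not_singleton {n : ℕ} (hn : 3 ≤ n) (w v : Fin n → ℤ) :
    translateCube n (cubC n) w ≠ {v} := by
  classical
  intro h
  set i0 : Fin n := ⟨0, by omega⟩ with hi0
  have hi0m : i0 ∈ cubC n := by simp [cubC, hi0]; omega
  have h1 : w ∈ translateCube n (cubC n) w := ⟨fun i _ => Or.inl rfl, fun j _ => rfl⟩
  have h2 : Function.update w i0 (w i0 + 1) ∈ translateCube n (cubC n) w := by
    constructor
    · intro i hi
      by_cases hii : i = i0
      · subst hii; right; rw [Function.update_self]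
      · left; rw [Function.update_of_ne hii]
    · intro j hj
      have : j ≠ i0 := fun hh => hj (hh ▸ hi0m)
      rw [Function.update_of_ne this]
  rw [h] at h1 h2
  rw [Set.mem_singleton_iff] at h1 h2
  have := congrFun (h1 ▸ h2 : Function.update w i0 (w i0 + 1) = w) i0
  rw [Function.update_self] at this
  omega

/-! ### nearest-vertex uniqueness inside a cube -/

lemma cube_nearest_unique {n : ℕ} (hn : 3 ≤ n) {u b : Fin n → ℤ}
    (hle : trhoSet n u (translateCube n (cubC n) b) ≤ 1) :
    ∃! w, w ∈ translateCube n (cubC n) b ∧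
      trho n u w = trhoSet n u (translateCube n (cubC n) b) := by
  classical
  set P := translateCube n (cubC n) b with hP
  have hbP : b ∈ P := ⟨fun i _ => Or.inl rfl, fun j _ => rfl⟩
  obtain ⟨x, hxP, hxd⟩ := trhoSet_attained (u := u) ⟨b, hbP⟩
  set d := trhoSet n u P with hd
  have hd01 : d = 0 ∨ d = 1 := by omega
  rcases hd01 with h0 | h1
  · -- u itself is in the cube
    have hux : x = u := by
      rw [h0] at hxd
      exact (trho_eq_zero_iff.mp hxd).symm
    subst hux
    refine ⟨x, ⟨hxP, hxd⟩, ?_⟩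
    rintro w ⟨hwP, hwd⟩
    rw [h0] at hwd
    exact (trho_eq_zero_iff.mp hwd).symm
  · -- distance one : unique nearest vertex
    have huP : u ∉ P := by
      intro hu
      have := trhoSet_le (u := u) hu
      rw [trho_self] at this
      omega
    refine ⟨x, ⟨hxP, hxd⟩, ?_⟩
    rintro w ⟨hwP, hwd⟩
    -- both w and x are at trho-distance 1 from u and in P; show w = x
    have key : ∀ y, y ∈ P → trho n u y = 1 → ∃ k, (∀ i, u i ≠ y i ↔ i = k) := by
      intro y hyP hy1
      rw [trho] at hy1
      split at hy1
      · next hbox =>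
        obtain ⟨k, hk⟩ := Finset.card_eq_one.mp hy1
        refine ⟨k, fun i => ?_⟩
        constructor
        · intro hne
          have : i ∈ Finset.univ.filter fun i => u i ≠ y i := by simp [hne]
          rw [hk] at this
          simpa using this
        · intro h
          subst h
          have : i ∈ ({i} : Finset (Fin n)) := Finset.mem_singleton_self i
          rw [← hk] at this
          simpa using this
      · omega
    have hbox : ∀ y, y ∈ P → trho n u y = 1 → ∀ i, |u i - y i| ≤ 1 := by
      intro y hyP hy1 i
      rw [trho] at hy1
      split at hy1
      · next hb => exact hb i
      · omega
    rw [h1] at hxd hwd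
    obtain ⟨k, hk⟩ := key x hxP hxd
    obtain ⟨k', hk'⟩ := key w hwP hwd
    have hxb := hbox x hxP hxd
    have hwb := hbox w hwP hwd
    set zdx : Fin n := ⟨n - 1, by omega⟩ with hz
    have hznc : zdx ∉ cubC n := by simp [cubC, hz]
    by_cases hkz : (k : ℕ) < n - 1
    · -- the differing coordinate is a cube coordinate
      have hkc : k ∈ cubC n := by simp [cubC, hkz]
      have hxk : x k = b k ∨ x k = b k + 1 := hxP.1 k hkc
      have hne : u k ≠ x k := (hk k).mpr rfl
      -- u k is not a cube value, else u ∈ P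
      have hunot : u k ≠ b k ∧ u k ≠ b k + 1 := by
        constructor <;>
        · intro hu
          apply huP
          constructor
          · intro i hi
            by_cases hik : i = k
            · subst hik; rw [hu]; first | exact Or.inl rfl | exact Or.inr rfl
            · have : u i = x i := by
                by_contra hne'
                exact hik ((hk i).mp hne')
              rw [this]; exact hxP.1 i hi
          · intro j hj
            have hjk : j ≠ k := fun hh => hj (hh ▸ hkc)
            have : u j = x j := by
              by_contra hne'
              exact hjk ((hk j).mp hne')
            rw [this]; exact hxP.2 j hj
      -- so u k = b k - 1 or b k + 2, and x k is forced
      have hfx : ∀ y, y ∈ P → (∀ i, |u i - y i| ≤ 1) → (u k ≠ y k) → y k = x k := by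
        intro y hyP hyb hyne
        have hyk : y k = b k ∨ y k = b k + 1 := hyP.1 k hkc
        have h1' := abs_le.mp (hyb k)
        have h2' := abs_le.mp (hxb k)
        omega
      -- w also differs from u at k
      have hwk : u k ≠ w k := by
        by_contra heq
        -- then w = u off k' and agrees at k; u k' ≠ w k'
        have hne' : u k' ≠ w k' := (hk' k').mpr rfl
        have hkk' : k ≠ k' := fun hh => hne' (hh ▸ heq)
        -- u agrees with w everywhere except k', so u ∈ P would follow if u k' were a cube value
        -- instead : w k' = b k' (if k' not cube coord) or cube value; derive u ∈ P or contradiction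
        by_cases hk'c : (k' : ℕ) < n - 1
        · have hk'm : k' ∈ cubC n := by simp [cubC, hk'c]
          -- u = w off k'; consider modifying at k' : u k' ≠ w k' ∈ {b k', b k'+1}
          -- u must equal x off k, x k ≠ u k = w k. but w k ∈ cube vals and x k ∈ cube vals
          -- w k = u k contradicts u k not a cube value
          have hwkv : w k = b k ∨ w k = b k + 1 := hwP.1 k hkc
          rcases hwkv with h | h <;> omega
        · have : w k = b k ∨ w k = b k + 1 := hwP.1 k hkc
          rcases this with h | h <;> omega
      have hkk' : k' = k := ((hk' k).mp hwk).symm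
      -- w agrees with u off k, equals x k at k
      funext i
      by_cases hik : i = k
      · subst hik
        exact hfx w hwP hwb hwk
      · have h1' : u i = w i := by
          by_contra hne'
          exact hik (hkk' ▸ (hk' i).mp hne')
        have h2' : u i = x i := by
          by_contra hne'
          exact hik ((hk i).mp hne')
        rw [← h1', ← h2']
    · -- the differing coordinate is the z coordinate
      have hkz' : k = zdx := by rw [Fin.ext_iff]; simp only [hz]; omega
      subst hkz'
      have hxzv : x zdx = b zdx := hxP.2 zdx hznc
      have hwzv : w zdx = b zdx := hwP.2 zdx hznc
      have hune : u zdx ≠ x zdx := (hk zdx).mpr rfl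
      have hwne : u zdx ≠ w zdx := by rw [hwzv, ← hxzv]; exact hune
      have hkk' : k' = zdx := ((hk' zdx).mp hwne).symm
      funext i
      by_cases hik : i = zdx
      · subst hik; rw [hwzv, hxzv]
      · have h1' : u i = w i := by
          by_contra hne'
          exact hik (hkk' ▸ (hk' i).mp hne')
        have h2' : u i = x i := by
          by_contra hne'
          exact hik ((hk i).mp hne')
        rw [← h1', ← h2']

/-! ### periodicity -/

lemma shift_mem_SS {n : ℕ} (hn : 3 ≤ n) (i : Fin n) (v : Fin n → ℤ) :
    v ∈ SS n ↔ v + (6 : ℤ) • Pi.single i (1 : ℤ) ∈ SS n := by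
  classical
  set w : Fin n → ℤ := v + (6 : ℤ) • Pi.single i (1 : ℤ) with hw
  have hwj : ∀ j, w j = v j + (if j = i then 6 else 0) := by
    intro j
    simp only [hw, Pi.add_apply, Pi.smul_apply, smul_eq_mul, Pi.single_apply]
    split <;> ring
  have hsig : sigC n w = sigC n v + (if i ∈ cubC n then 2 else 0) := by
    have : ∀ j ∈ cubC n, w j / 3 = v j / 3 + (if j = i then 2 else 0) := by
      intro j _
      rw [hwj j]
      split <;> omega
    rw [sigC, Finset.sum_congr rfl this, Finset.sum_add_distrib, Finset.sum_ite_eq' (cubC n) i]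
    rfl
  have hpt : inPt n v ↔ inPt n w := by
    constructor <;> intro h j <;> have := h j <;> have := hwj j <;> split at * <;> omega
  have hcube : inCube n v ↔ inCube n w := by
    constructor <;> intro h
    · constructor
      · intro j hj
        have := h.1 j hj
        have := hwj j
        split at * <;> omega
      · intro j hj
        have h2 := h.2 j hj
        have h3 := hwj j
        have hji : j ≠ i ∨ j = i := by tauto
        rw [hsig]
        split <;> (try split at h3) <;> omega
    · constructor
      · intro j hj
        have := h.1 j hj
        have := hwj j
        split at * <;> omega
      · intro j hj
        have h2 := h.2 j hj
        have h3 := hwj j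
        rw [hsig] at h2
        split at h2 <;> omega
  show (inCube n v ∨ inPt n v) ↔ (inCube n w ∨ inPt n w)
  rw [hpt, hcube]


/-! ### small helpers for the main theorem -/

lemma comp_eq_of_mem {n : ℕ} {H H' : ((gridGraph n).induce (SS n)).ConnectedComponent}
    {y : Fin n → ℤ} (hy1 : y ∈ compVerts n (SS n) H) (hy2 : y ∈ compVerts n (SS n) H') :
    H = H' := by
  obtain ⟨h1, e1⟩ := hy1
  obtain ⟨h2, e2⟩ := hy2
  rw [← e1, ← e2]

lemma inCube_zero {n : ℕ} : inCube n (fun _ => (0 : ℤ)) := by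
  constructor
  · intro i _; left; rfl
  · intro i _
    simp [sigC]

lemma inPt_two {n : ℕ} : inPt n (fun _ => (2 : ℤ)) := fun _ => rfl

lemma Ncnt_le {n : ℕ} (u : Fin n → ℤ) : Ncnt n u ≤ n := by
  have := Finset.card_le_univ (Finset.univ.filter fun i => u i % 3 = 2)
  simpa [Ncnt] using this

/-- helper : components satisfying the cube-ball condition -/
lemma helper_cube {n : ℕ} (hn : 3 ≤ n) {u : Fin n → ℤ}
    {H : ((gridGraph n).induce (SS n)).ConnectedComponent}
    (h : (∃ w : Fin n → ℤ, compVerts n (SS n) H = translateCube n (cubC n) w) ∧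
      trhoSet n u (compVerts n (SS n) H) ≤ 1) :
    ∃ x, inCube n x ∧ trho n u x ≤ 1 ∧
      compVerts n (SS n) H = translateCube n (cubC n) (baseOf n x) ∧
      x ∈ compVerts n (SS n) H := by
  obtain ⟨⟨w, hw⟩, hle⟩ := h
  obtain ⟨v, hrep⟩ := H.exists_rep
  obtain ⟨r, hr⟩ := v
  have hCV : compVerts n (SS n) H = pieceOf n r := by
    rw [← hrep]; exact compVerts_eq hn hr
  have hr' := hr
  rcases hr' with hc | hp
  · rw [hCV, pieceOf_cube hn hc] at hw hle ⊢
    have hbmem : baseOf n r ∈ translateCube n (cubC n) (baseOf n r) :=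
      ⟨fun i _ => Or.inl rfl, fun j _ => rfl⟩
    obtain ⟨x, hxmem, hxd⟩ := trhoSet_attained (u := u) ⟨_, hbmem⟩
    obtain ⟨hxc, hxb⟩ := mem_cube_base hc hxmem
    refine ⟨x, hxc, by omega, by rw [hxb], hxmem⟩
  · rw [hCV, pieceOf_pt hp] at hw
    exact absurd hw.symm (cube_not_singleton hn w r)

/-- helper : components satisfying the point-ball condition -/
lemma helper_pt {n : ℕ} (hn : 3 ≤ n) {u : Fin n → ℤ}
    {H : ((gridGraph n).induce (SS n)).ConnectedComponent}
    (h : (∃ v : Fin n → ℤ, compVerts n (SS n) H = {v}) ∧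
      trhoSet n u (compVerts n (SS n) H) ≤ n - 2) :
    2 ≤ Ncnt n u ∧ compVerts n (SS n) H = {qpt n u} := by
  obtain ⟨⟨v, hv⟩, hle⟩ := h
  obtain ⟨vv, hrep⟩ := H.exists_rep
  obtain ⟨r, hr⟩ := vv
  have hCV : compVerts n (SS n) H = pieceOf n r := by
    rw [← hrep]; exact compVerts_eq hn hr
  have hr' := hr
  rcases hr' with hc | hp
  · rw [hCV, pieceOf_cube hn hc] at hv
    exact absurd hv (cube_not_singleton hn _ v)
  · rw [hCV, pieceOf_pt hp] at hle ⊢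
    rw [trhoSet_singleton] at hle
    have hge := trho_pt_ge (u := u) hp
    have hNle := Ncnt_le u
    have hN2 : 2 ≤ Ncnt n u := by omega
    have hbox : ∀ i, |u i - r i| ≤ 1 := by
      by_contra hb
      rw [trho] at hle
      rw [if_neg hb] at hle
      omega
    have := qpt_unique hp hbox
    rw [this]
    exact ⟨hN2, rfl⟩


/-- For `n ≥ 3` there is a periodic set `S ⊆ ℤ^n` whose induced
components are translates of a fixed binary `(n−1)`-cube and single vertices (both kinds
occurring), such that the truncated spheres of radius `1` around the cube components and
of radius `n−2` around the singleton components partition `ℤ^n`, with unique nearest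
central vertex. -/
theorem stmt_3 (n : ℕ) (hn : 3 ≤ n) :
    ∃ (S : Set (Fin n → ℤ)) (A : Finset (Fin n)), A.card = n - 1 ∧
      (∀ H : ((gridGraph n).induce S).ConnectedComponent,
        (∃ w : Fin n → ℤ, compVerts n S H = translateCube n A w) ∨
        (∃ v : Fin n → ℤ, compVerts n S H = {v})) ∧
      (∃ H : ((gridGraph n).induce S).ConnectedComponent, ∃ w : Fin n → ℤ,
        compVerts n S H = translateCube n A w) ∧
      (∃ H : ((gridGraph n).induce S).ConnectedComponent, ∃ v : Fin n → ℤ,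
        compVerts n S H = {v}) ∧
      (∀ u : Fin n → ℤ, ∃! H : ((gridGraph n).induce S).ConnectedComponent,
        ((∃ w : Fin n → ℤ, compVerts n S H = translateCube n A w) ∧
          trhoSet n u (compVerts n S H) ≤ 1) ∨
        ((∃ v : Fin n → ℤ, compVerts n S H = {v}) ∧
          trhoSet n u (compVerts n S H) ≤ n - 2)) ∧
      (∀ u : Fin n → ℤ, ∀ H : ((gridGraph n).induce S).ConnectedComponent,
        (((∃ w : Fin n → ℤ, compVerts n S H = translateCube n A w) ∧
            trhoSet n u (compVerts n S H) ≤ 1) ∨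
          ((∃ v : Fin n → ℤ, compVerts n S H = {v}) ∧
            trhoSet n u (compVerts n S H) ≤ n - 2)) →
        ∃! w, w ∈ compVerts n S H ∧ trho n u w = trhoSet n u (compVerts n S H)) ∧
      (∃ p : Fin n → ℕ, (∀ i, 1 ≤ p i) ∧
        ∀ i : Fin n, ∀ v : Fin n → ℤ,
          v ∈ S ↔ v + (p i : ℤ) • Pi.single i (1 : ℤ) ∈ S) := by
  classical
  refine ⟨SS n, cubC n, card_cubC n (by omega), ?_, ?_, ?_, ?_, ?_, ?_⟩
  · -- every component is a cube or a singleton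
    intro H
    obtain ⟨v, hrep⟩ := H.exists_rep
    obtain ⟨r, hr⟩ := v
    have hCV : compVerts n (SS n) H = pieceOf n r := by
      rw [← hrep]; exact compVerts_eq hn hr
    have hr' := hr
    rcases hr' with hc | hp
    · exact Or.inl ⟨baseOf n r, by rw [hCV, pieceOf_cube hn hc]⟩
    · exact Or.inr ⟨r, by rw [hCV, pieceOf_pt hp]⟩
  · -- a cube component exists
    have hc : inCube n (fun _ => (0:ℤ)) := inCube_zero
    refine ⟨((gridGraph n).induce (SS n)).connectedComponentMk ⟨_, inCube_mem_SS hc⟩,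
      baseOf n (fun _ => (0:ℤ)), ?_⟩
    rw [compVerts_eq hn (inCube_mem_SS hc), pieceOf_cube hn hc]
  · -- a singleton component exists
    have hp : inPt n (fun _ => (2:ℤ)) := inPt_two
    refine ⟨((gridGraph n).induce (SS n)).connectedComponentMk ⟨_, inPt_mem_SS hp⟩,
      (fun _ => (2:ℤ)), ?_⟩
    rw [compVerts_eq hn (inPt_mem_SS hp), pieceOf_pt hp]
  · -- the balls partition ℤ^n
    intro u
    by_cases hN : 2 ≤ Ncnt n u
    · -- point ball case
      have hq := qpt_inPt (n := n) u
      set H := ((gridGraph n).induce (SS n)).connectedComponentMk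
        ⟨qpt n u, inPt_mem_SS hq⟩ with hH
      have hCV : compVerts n (SS n) H = {qpt n u} := by
        rw [hH, compVerts_eq hn (inPt_mem_SS hq), pieceOf_pt hq]
      refine ⟨H, Or.inr ⟨⟨qpt n u, hCV⟩, ?_⟩, ?_⟩
      · rw [hCV, trhoSet_singleton, trho_qpt]
        have := Ncnt_le u
        omega
      · intro H' hH'
        rcases hH' with hcube | hpt
        · obtain ⟨x, hxc, hxd, _, _⟩ := helper_cube hn hcube
          have := trho_cube_ge (u := u) hxc
          omega
        · obtain ⟨_, hCV'⟩ := helper_pt hn hpt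
          apply comp_eq_of_mem (y := qpt n u)
          · rw [hCV']; rfl
          · rw [hCV]; rfl
    · -- cube ball case
      push_neg at hN
      obtain ⟨x₀, hx₀c, hx₀d⟩ := cube_decode_exists hn u (by omega)
      set H := ((gridGraph n).induce (SS n)).connectedComponentMk
        ⟨x₀, inCube_mem_SS hx₀c⟩ with hH
      have hCV : compVerts n (SS n) H = translateCube n (cubC n) (baseOf n x₀) := by
        rw [hH, compVerts_eq hn (inCube_mem_SS hx₀c), pieceOf_cube hn hx₀c]
      refine ⟨H, Or.inl ⟨⟨baseOf n x₀, hCV⟩, ?_⟩, ?_⟩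
      · rw [hCV]
        exact le_trans (trhoSet_le (self_mem_cube hx₀c)) hx₀d
      · intro H' hH'
        rcases hH' with hcube | hpt
        · obtain ⟨x, hxc, hxd, hCV', hxmem⟩ := helper_cube hn hcube
          have hbase : baseOf n x = baseOf n x₀ := cube_close_base_eq hn hxc hx₀c hxd hx₀d
          apply comp_eq_of_mem (y := x₀)
          · rw [hCV', hbase]; exact self_mem_cube hx₀c
          · rw [hCV]; exact self_mem_cube hx₀c
        · obtain ⟨h2, _⟩ := helper_pt hn hpt
          omega
  · -- unique nearest vertex
    intro u H hyp
    rcases hyp with hcube | hpt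
    · obtain ⟨x, hxc, hxd, hCV, hxmem⟩ := helper_cube hn hcube
      rw [hCV]
      exact cube_nearest_unique hn (hCV ▸ hcube.2)
    · obtain ⟨⟨v, hv⟩, _⟩ := hpt
      rw [hv]
      refine ⟨v, ⟨rfl, by rw [trhoSet_singleton]⟩, ?_⟩
      rintro w ⟨hw, _⟩
      exact hw
  · -- periodicity
    refine ⟨fun _ => 6, fun _ => by norm_num, ?_⟩
    intro i v
    have := shift_mem_SS hn i v
    simpa using this
end

section
/- Let n ≥ 1 and let c_1,…,c_n ≥ 2 and k_1,…,k_n ≥ 1 be integers, and set m_i = (c_i+1)k_i. Then the toroidal grid C_{m_1}□⋯□C_{m_n} contains an n-PTMC S with respect to the torus truncated distance, such that each connected component of the subgraph induced by S is the image under coordinatewise reduction of a translate of the box Π_{i=1}^n {0,…,c_i−2} in ℤ^n (a cartesian product over i of paths with c_i−1 vertices). -/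
/-- The toroidal grid `C_{m 0} □ ⋯ □ C_{m (n-1)}`: two vertices are adjacent iff they
differ in exactly one coordinate, by `±1` there. -/
def torusGraph (n : ℕ) (m : Fin n → ℕ) : SimpleGraph (Π i, ZMod (m i)) where
  Adj u v := u ≠ v ∧ ∃ i, (v i = u i + 1 ∨ v i = u i - 1) ∧ ∀ j, j ≠ i → u j = v j
  symm := by
    constructor
    rintro u v ⟨hne, i, hi, hj⟩
    refine ⟨hne.symm, i, ?_, fun j hj' => (hj j hj').symm⟩
    rcases hi with h | h
    · right; rw [h]; ring
    · left; rw [h]; ring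
  loopless := by
    constructor
    rintro u ⟨hne, -⟩
    exact hne rfl

/-- The torus truncated distance (valued in `ℕ`). -/
def ttrho (n : ℕ) (m : Fin n → ℕ) (u v : Π i, ZMod (m i)) : ℕ :=
  if ∀ i, u i = v i ∨ u i - v i = 1 ∨ u i - v i = -1 then
    (Finset.univ.filter fun i => u i ≠ v i).card
  else n + 1

/-- Torus truncated distance from a point to a set. -/
noncomputable def ttrhoSet (n : ℕ) (m : Fin n → ℕ) (u : Π i, ZMod (m i))
    (S : Set (Π i, ZMod (m i))) : ℕ :=
  sInf {d | ∃ s ∈ S, ttrho n m u s = d}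

/-- The vertex set of a connected component `H` of the subgraph of the toroidal grid
induced by `S`. -/
def tCompVerts (n : ℕ) (m : Fin n → ℕ) (S : Set (Π i, ZMod (m i)))
    (H : ((torusGraph n m).induce S).ConnectedComponent) : Set (Π i, ZMod (m i)) :=
  {v | ∃ h : v ∈ S, ((torusGraph n m).induce S).connectedComponentMk ⟨v, h⟩ = H}

/-- `S` is a `t`-perfect truncated-metric code in the toroidal grid. -/
def IsTorusPTMC (n : ℕ) (m : Fin n → ℕ) (t : ℕ) (S : Set (Π i, ZMod (m i))) : Prop :=
  (∀ u : Π i, ZMod (m i), ∃! s, s ∈ S ∧ ttrho n m u s = ttrhoSet n m u S) ∧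
  (∀ u : Π i, ZMod (m i), ∃! H : ((torusGraph n m).induce S).ConnectedComponent,
    ttrhoSet n m u (tCompVerts n m S H) ≤ t)

namespace S4Aux

variable {q k : ℕ}

/-- membership of a coordinate in the code -/
def inS (q k : ℕ) (x : ZMod (q * k)) : Prop := x.val % q + 3 ≤ q

instance : DecidablePred (inS q k) := fun _ => by unfold inS; infer_instance

/-- the nearest code coordinate -/
def near (q k : ℕ) (x : ZMod (q * k)) : ZMod (q * k) :=
  if x.val % q + 3 ≤ q then x else if x.val % q + 2 = q then x - 1 else x + 1

/-- block index -/
def blk (q k : ℕ) (x : ZMod (q * k)) : ℕ := x.val / q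

/-- ball (closed-neighborhood block) index -/
def bla (q k : ℕ) (x : ZMod (q * k)) : ℕ := (x + 1).val / q

lemma neZero' (hq : 3 ≤ q) (hk : 1 ≤ k) : NeZero (q * k) :=
  ⟨(Nat.mul_pos (by omega : 0 < q) hk).ne'⟩

lemma mpos (hq : 3 ≤ q) (hk : 1 ≤ k) : 0 < q * k := Nat.mul_pos (by omega) hk

lemma val_lt' (hq : 3 ≤ q) (hk : 1 ≤ k) (x : ZMod (q * k)) : x.val < q * k := by
  haveI := neZero' hq hk; exact ZMod.val_lt x

lemma cast_val' (hq : 3 ≤ q) (hk : 1 ≤ k) (x : ZMod (q * k)) :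
    ((x.val : ℕ) : ZMod (q * k)) = x := by
  haveI := neZero' hq hk
  rw [ZMod.natCast_val, ZMod.cast_id]

lemma val_add_one (hq : 3 ≤ q) (hk : 1 ≤ k) (x : ZMod (q * k)) :
    (x + 1).val = if x.val + 1 = q * k then 0 else x.val + 1 := by
  haveI := neZero' hq hk
  have h1 : x + 1 = ((x.val + 1 : ℕ) : ZMod (q * k)) := by
    rw [Nat.cast_add, Nat.cast_one, cast_val' hq hk]
  rw [h1, ZMod.val_natCast]
  have hlt := val_lt' hq hk x
  split
  · next h => rw [h, Nat.mod_self]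
  · next h => exact Nat.mod_eq_of_lt (by omega)

lemma val_sub_one (hq : 3 ≤ q) (hk : 1 ≤ k) (x : ZMod (q * k)) :
    (x - 1).val = if x.val = 0 then q * k - 1 else x.val - 1 := by
  haveI := neZero' hq hk
  have hm := mpos hq hk
  have h1 : x - 1 = ((x.val + (q * k - 1) : ℕ) : ZMod (q * k)) := by
    rw [Nat.cast_add, cast_val' hq hk, Nat.cast_sub (by omega : 1 ≤ q * k),
      ZMod.natCast_self, Nat.cast_one]
    ring
  rw [h1, ZMod.val_natCast]
  have hlt := val_lt' hq hk x
  split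
  · next h => rw [h]; simpa using Nat.mod_eq_of_lt (show q * k - 1 < q * k by omega)
  · next h =>
      have e : x.val + (q * k - 1) = (x.val - 1) + 1 * (q * k) := by omega
      rw [e, Nat.add_mul_mod_self_right]
      exact Nat.mod_eq_of_lt (by omega)

lemma decomp (hq : 3 ≤ q) (hk : 1 ≤ k) (x : ZMod (q * k)) :
    x.val = x.val / q * q + x.val % q ∧ x.val % q < q ∧ x.val / q < k := by
  have hq0 : 0 < q := by omega
  have hlt := val_lt' hq hk x
  refine ⟨(Nat.div_add_mod' x.val q).symm, Nat.mod_lt _ hq0, ?_⟩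
  exact Nat.div_lt_of_lt_mul hlt


lemma dm_div (hq : 3 ≤ q) (b s : ℕ) (hs : s < q) : (b * q + s) / q = b := by
  rw [mul_comm, Nat.mul_add_div (by omega)]
  simp [Nat.div_eq_of_lt hs]

lemma dm_mod (hq : 3 ≤ q) (b s : ℕ) (hs : s < q) : (b * q + s) % q = s := by
  rw [mul_comm, Nat.mul_add_mod]
  exact Nat.mod_eq_of_lt hs

lemma small_add (hq : 3 ≤ q) (hk : 1 ≤ k) (x : ZMod (q * k)) (h : x.val % q + 1 < q) :
    (x + 1).val = x.val + 1 ∧ (x + 1).val % q = x.val % q + 1 ∧ (x + 1).val / q = x.val / q := by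
  obtain ⟨hdec, hr, hb⟩ := decomp hq hk x
  have h2 : (x.val / q + 1) * q ≤ k * q := Nat.mul_le_mul_right q hb
  rw [add_mul, one_mul] at h2
  have hkq : q * k = k * q := Nat.mul_comm q k
  have hne : x.val + 1 ≠ q * k := by omega
  have hv : (x + 1).val = x.val + 1 := by rw [val_add_one hq hk, if_neg hne]
  have e : x.val + 1 = x.val / q * q + (x.val % q + 1) := by omega
  refine ⟨hv, ?_, ?_⟩
  · rw [hv, e, dm_mod hq _ _ (by omega)]
  · rw [hv, e, dm_div hq _ _ (by omega)]

lemma small_sub (hq : 3 ≤ q) (hk : 1 ≤ k) (x : ZMod (q * k)) (h : 1 ≤ x.val % q) :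
    (x - 1).val = x.val - 1 ∧ (x - 1).val % q = x.val % q - 1 ∧ (x - 1).val / q = x.val / q := by
  obtain ⟨hdec, hr, hb⟩ := decomp hq hk x
  have hne : x.val ≠ 0 := by omega
  have hv : (x - 1).val = x.val - 1 := by rw [val_sub_one hq hk, if_neg hne]
  have e : x.val - 1 = x.val / q * q + (x.val % q - 1) := by omega
  refine ⟨hv, ?_, ?_⟩
  · rw [hv, e, dm_mod hq _ _ (by omega)]
  · rw [hv, e, dm_div hq _ _ (by omega)]

lemma wrap_add (hq : 3 ≤ q) (hk : 1 ≤ k) (x : ZMod (q * k)) (h : x.val % q + 1 = q) :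
    (x + 1).val % q = 0 := by
  obtain ⟨hdec, hr, hb⟩ := decomp hq hk x
  rw [val_add_one hq hk]
  split
  · simp
  · have e : x.val + 1 = (x.val / q + 1) * q + 0 := by rw [add_mul, one_mul]; omega
    rw [e, dm_mod hq _ _ (by omega)]

lemma wrap_sub (hq : 3 ≤ q) (hk : 1 ≤ k) (x : ZMod (q * k)) (h : x.val % q = 0) :
    (x - 1).val % q = q - 1 := by
  obtain ⟨hdec, hr, hb⟩ := decomp hq hk x
  rw [val_sub_one hq hk]
  split
  · next h0 =>
    have h1 : (k - 1 + 1) * q = k * q := by rw [Nat.sub_add_cancel hk]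
    rw [add_mul, one_mul] at h1
    have hkq : q * k = k * q := Nat.mul_comm q k
    have e : q * k - 1 = (k - 1) * q + (q - 1) := by omega
    rw [e, dm_mod hq _ _ (by omega)]
  · next h0 =>
    have hb1 : 1 ≤ x.val / q := by
      rcases Nat.eq_zero_or_pos (x.val / q) with h'' | h''
      · rw [h'', zero_mul, zero_add] at hdec
        omega
      · exact h''
    have h1 : (x.val / q - 1 + 1) * q = x.val / q * q := by rw [Nat.sub_add_cancel hb1]
    rw [add_mul, one_mul] at h1
    have e : x.val - 1 = (x.val / q - 1) * q + (q - 1) := by omega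
    rw [e, dm_mod hq _ _ (by omega)]

lemma add_one_ne (hq : 3 ≤ q) (hk : 1 ≤ k) (x : ZMod (q * k)) : x + 1 ≠ x := by
  intro h
  have hv := congrArg ZMod.val h
  rw [val_add_one hq hk] at hv
  have := val_lt' hq hk x
  have h3 : q ≤ q * k := Nat.le_mul_of_pos_right q hk
  split at hv <;> omega

lemma sub_one_ne (hq : 3 ≤ q) (hk : 1 ≤ k) (x : ZMod (q * k)) : x - 1 ≠ x := by
  intro h
  have hv := congrArg ZMod.val h
  rw [val_sub_one hq hk] at hv
  have := val_lt' hq hk x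
  have h3 : q ≤ q * k := Nat.le_mul_of_pos_right q hk
  split at hv <;> omega

lemma near_cases (hq : 3 ≤ q) (hk : 1 ≤ k) (x : ZMod (q * k)) :
    (near q k x = x ∧ inS q k x) ∨
      (¬ inS q k x ∧ ((near q k x = x - 1 ∧ x.val % q + 2 = q) ∨
        (near q k x = x + 1 ∧ x.val % q + 1 = q))) := by
  obtain ⟨hdec, hr, hb⟩ := decomp hq hk x
  unfold near inS
  split
  · next h => exact Or.inl ⟨rfl, h⟩
  · next h =>
    refine Or.inr ⟨h, ?_⟩
    split
    · next h2 => exact Or.inl ⟨rfl, h2⟩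
    · next h2 => exact Or.inr ⟨rfl, by omega⟩

lemma inS_near (hq : 3 ≤ q) (hk : 1 ≤ k) (x : ZMod (q * k)) : inS q k (near q k x) := by
  rcases near_cases hq hk x with ⟨he, hi⟩ | ⟨hni, ⟨he, hm⟩ | ⟨he, hm⟩⟩
  · rw [he]; exact hi
  · rw [he]
    have := (small_sub hq hk x (by omega)).2.1
    unfold inS
    omega
  · rw [he]
    have := wrap_add hq hk x hm
    unfold inS
    omega

lemma near_diff (hq : 3 ≤ q) (hk : 1 ≤ k) (x : ZMod (q * k)) :
    x = near q k x ∨ x - near q k x = 1 ∨ x - near q k x = -1 := by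
  rcases near_cases hq hk x with ⟨he, _⟩ | ⟨_, ⟨he, _⟩ | ⟨he, _⟩⟩
  · rw [he]; exact Or.inl rfl
  · rw [he]; right; left; ring
  · rw [he]; right; right; ring

lemma near_eq_self (x : ZMod (q * k)) (h : inS q k x) : near q k x = x := if_pos h

lemma near_ne_self (hq : 3 ≤ q) (hk : 1 ≤ k) (x : ZMod (q * k)) (h : ¬ inS q k x) :
    near q k x ≠ x := by
  rcases near_cases hq hk x with ⟨_, hi⟩ | ⟨_, ⟨he, _⟩ | ⟨he, _⟩⟩
  · exact absurd hi h
  · rw [he]; exact sub_one_ne hq hk x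
  · rw [he]; exact add_one_ne hq hk x

lemma near_unique (hq : 3 ≤ q) (hk : 1 ≤ k) (x s : ZMod (q * k)) (hs : inS q k s)
    (hx : ¬ inS q k x) (h : x = s ∨ x - s = 1 ∨ x - s = -1) : s = near q k x := by
  have hform : x = s ∨ x = s + 1 ∨ x = s - 1 := by
    rcases h with h | h | h
    · exact Or.inl h
    · right; left; linear_combination h
    · right; right; linear_combination h
  rcases hform with rfl | rfl | rfl
  · exact absurd hs hx
  · -- x = s + 1
    have hsmall := small_add hq hk s (by unfold inS at hs; omega)
    have hr : (s + 1).val % q = s.val % q + 1 := hsmall.2.1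
    have hts : s.val % q = q - 3 := by unfold inS at hs hx; omega
    unfold near
    rw [if_neg (by omega), if_pos (by omega)]
    ring
  · -- x = s - 1
    rcases Nat.eq_zero_or_pos (s.val % q) with h0 | h0
    · have hw := wrap_sub hq hk s h0
      unfold near
      rw [if_neg (by omega), if_neg (by omega)]
      ring
    · have hsmall := small_sub hq hk s h0
      exfalso
      apply hx
      unfold inS at hs ⊢
      omega

lemma bla_eq_blk (hq : 3 ≤ q) (hk : 1 ≤ k) (s : ZMod (q * k)) (hs : inS q k s) :
    bla q k s = blk q k s := by
  unfold inS at hs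
  exact (small_add hq hk s (by omega)).2.2

lemma bla_near (hq : 3 ≤ q) (hk : 1 ≤ k) (x : ZMod (q * k)) :
    bla q k x = blk q k (near q k x) := by
  rcases near_cases hq hk x with ⟨he, hi⟩ | ⟨hni, ⟨he, hm⟩ | ⟨he, hm⟩⟩
  · rw [he]; exact bla_eq_blk hq hk x hi
  · rw [he]
    unfold bla blk
    rw [(small_add hq hk x (by omega)).2.2, (small_sub hq hk x (by omega)).2.2]
  · rw [he]; rfl

lemma bla_of_nbr (hq : 3 ≤ q) (hk : 1 ≤ k) (x s : ZMod (q * k)) (hs : inS q k s)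
    (h : x = s ∨ x - s = 1 ∨ x - s = -1) : bla q k x = blk q k s := by
  unfold inS at hs
  have hform : x = s ∨ x = s + 1 ∨ x = s - 1 := by
    rcases h with h | h | h
    · exact Or.inl h
    · right; left; linear_combination h
    · right; right; linear_combination h
  rcases hform with rfl | rfl | rfl
  · unfold bla blk
    exact (small_add hq hk x (by omega)).2.2
  · have h1 := small_add hq hk s (by omega)
    unfold bla blk
    have h2 := small_add hq hk (s + 1) (by omega)
    rw [h2.2.2, h1.2.2]
  · unfold bla blk
    rw [sub_add_cancel]

lemma adj_blk (hq : 3 ≤ q) (hk : 1 ≤ k) (x y : ZMod (q * k)) (hx : inS q k x)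
    (hy : inS q k y) (h : y = x + 1 ∨ y = x - 1) : blk q k y = blk q k x := by
  unfold inS at hx hy
  rcases h with rfl | rfl
  · exact (small_add hq hk x (by omega)).2.2
  · rcases Nat.eq_zero_or_pos (x.val % q) with h0 | h0
    · have := wrap_sub hq hk x h0
      omega
    · exact (small_sub hq hk x h0).2.2

lemma step_up (hq : 3 ≤ q) (hk : 1 ≤ k) (x y : ZMod (q * k)) (hx : inS q k x)
    (hy : inS q k y) (hb : blk q k x = blk q k y) (hlt : x.val < y.val) :
    inS q k (x + 1) ∧ blk q k (x + 1) = blk q k x ∧ (x + 1).val = x.val + 1 := by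
  unfold inS at hx hy
  unfold blk at hb
  have hdx := (decomp hq hk x).1
  have hdy := (decomp hq hk y).1
  have hrlt : x.val % q < y.val % q := by
    rw [hb] at hdx
    omega
  have hsm := small_add hq hk x (by omega)
  exact ⟨by unfold inS; omega, hsm.2.2, hsm.1⟩

lemma blk_lt (hq : 3 ≤ q) (hk : 1 ≤ k) (x : ZMod (q * k)) : blk q k x < k :=
  (decomp hq hk x).2.2

lemma int_box_fwd (hq : 3 ≤ q) (hk : 1 ≤ k) (x : ZMod (q * k)) (h : inS q k x) :
    ((blk q k x * q : ℕ) : ℤ) ≤ (x.val : ℤ) ∧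
      (x.val : ℤ) ≤ (blk q k x * q : ℕ) + (q : ℤ) - 3 ∧
      (((x.val : ℤ) : ZMod (q * k)) = x) := by
  obtain ⟨hdec, hr, hb⟩ := decomp hq hk x
  unfold inS at h
  unfold blk
  refine ⟨?_, ?_, ?_⟩
  · have h1 : x.val / q * q ≤ x.val := by omega
    exact_mod_cast h1
  · have h1 : x.val + 3 ≤ x.val / q * q + q := by omega
    have h2 : (x.val : ℤ) + 3 ≤ ((x.val / q * q : ℕ) : ℤ) + (q : ℤ) := by exact_mod_cast h1
    omega
  · rw [Int.cast_natCast, cast_val' hq hk]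

lemma int_box_bwd (hq : 3 ≤ q) (hk : 1 ≤ k) (b : ℕ) (hb : b < k) (v : ℤ)
    (h1 : ((b * q : ℕ) : ℤ) ≤ v) (h2 : v ≤ (b * q : ℕ) + (q : ℤ) - 3) :
    inS q k ((v : ZMod (q * k))) ∧ blk q k ((v : ZMod (q * k))) = b := by
  haveI := neZero' hq hk
  have hv0 : 0 ≤ v := le_trans (by positivity) h1
  obtain ⟨t, rfl⟩ := Int.eq_ofNat_of_zero_le hv0
  have ht1 : b * q ≤ t := by exact_mod_cast h1
  have ht2 : (t : ℤ) ≤ (b * q : ℕ) + (q : ℤ) - 3 := h2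
  have ht2' : t + 3 ≤ b * q + q := by
    have : (t : ℤ) + 3 ≤ (b * q : ℕ) + q := by omega
    exact_mod_cast this
  have hbq : (b + 1) * q ≤ k * q := Nat.mul_le_mul_right q hb
  rw [add_mul, one_mul] at hbq
  have hkq : q * k = k * q := Nat.mul_comm q k
  have htlt : t < q * k := by omega
  have hcast : ((t : ℤ) : ZMod (q * k)) = ((t : ℕ) : ZMod (q * k)) := by push_cast; rfl
  have hval : ((t : ℕ) : ZMod (q * k)).val = t := by
    rw [ZMod.val_natCast, Nat.mod_eq_of_lt htlt]
  have e : t = b * q + (t - b * q) := by omega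
  constructor
  · unfold inS
    rw [hcast, hval, e, dm_mod hq _ _ (by omega)]
    omega
  · unfold blk
    rw [hcast, hval, e, dm_div hq _ _ (by omega)]

lemma val_inj (hq : 3 ≤ q) (hk : 1 ≤ k) {x y : ZMod (q * k)} (h : x.val = y.val) : x = y := by
  rw [← cast_val' hq hk x, ← cast_val' hq hk y, h]


end S4Aux

namespace S4Glob
open S4Aux

variable {n : ℕ} {c k : Fin n → ℕ}

def Sset (n : ℕ) (c k : Fin n → ℕ) : Set (Π i : Fin n, ZMod ((c i + 1) * k i)) :=
  {u | ∀ i, inS (c i + 1) (k i) (u i)}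

section
variable (hc : ∀ i, 2 ≤ c i) (hk : ∀ i, 1 ≤ k i)

lemma hq' (hc : ∀ i, 2 ≤ c i) (i : Fin n) : 3 ≤ c i + 1 := by have := hc i; omega

lemma reach_of_blk (hc : ∀ i, 2 ≤ c i) (hk : ∀ i, 1 ≤ k i) (d : ℕ) :
    ∀ (u v : Π i : Fin n, ZMod ((c i + 1) * k i)) (hu : u ∈ Sset n c k)
      (hv : v ∈ Sset n c k),
      (∀ i, blk (c i + 1) (k i) (u i) = blk (c i + 1) (k i) (v i)) →
      (∑ i, (((v i).val - (u i).val) + ((u i).val - (v i).val))) ≤ d →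
      ((torusGraph n (fun i => (c i + 1) * k i)).induce (Sset n c k)).Reachable
        ⟨u, hu⟩ ⟨v, hv⟩ := by
  induction d with
  | zero =>
    intro u v hu hv hb hd
    have h0 : ∀ i ∈ Finset.univ,
        (((v i).val - (u i).val) + ((u i).val - (v i).val)) = 0 :=
      Finset.sum_eq_zero_iff.mp (Nat.le_zero.mp hd)
    have huv : u = v := by
      funext i
      exact val_inj (hq' hc i) (hk i) (by have := h0 i (Finset.mem_univ i); omega)
    subst huv
    rfl
  | succ d ih =>
    intro u v hu hv hb hd
    by_cases huv : u = v
    · subst huv; rfl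
    · obtain ⟨i, hi⟩ := Function.ne_iff.mp huv
      have hvne : (u i).val ≠ (v i).val := fun h => hi (val_inj (hq' hc i) (hk i) h)
      rcases Nat.lt_or_ge (u i).val (v i).val with hlt | hge
      · obtain ⟨hS', hblk', hval'⟩ :=
          step_up (hq' hc i) (hk i) (u i) (v i) (hu i) (hv i) (hb i) hlt
        set u' := Function.update u i (u i + 1) with hu'def
        have hu' : u' ∈ Sset n c k := by
          intro j
          by_cases hj : j = i
          · subst hj; rw [hu'def, Function.update_self]; exact hS'
          · rw [hu'def, Function.update_of_ne hj]; exact hu j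
        have hadj : (torusGraph n (fun i => (c i + 1) * k i)).Adj u u' := by
          refine ⟨?_, i, Or.inl (Function.update_self i _ u), fun j hj =>
            (Function.update_of_ne hj _ u).symm⟩
          intro h
          have h2 := congrFun h i
          rw [hu'def, Function.update_self] at h2
          exact add_one_ne (hq' hc i) (hk i) (u i) h2.symm
        have hb' : ∀ j, blk (c j + 1) (k j) (u' j) = blk (c j + 1) (k j) (v j) := by
          intro j
          by_cases hj : j = i
          · subst hj; rw [hu'def, Function.update_self, hblk']; exact hb j
          · rw [hu'def, Function.update_of_ne hj]; exact hb j
        have hd' : (∑ j, (((v j).val - (u' j).val) + ((u' j).val - (v j).val))) ≤ d := by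
          have hup : u' i = u i + 1 := Function.update_self i _ u
          have s1 : (∑ j, (((v j).val - (u' j).val) + ((u' j).val - (v j).val))) =
              (((v i).val - (u' i).val) + ((u' i).val - (v i).val)) +
                ∑ j ∈ Finset.univ.erase i,
                  (((v j).val - (u' j).val) + ((u' j).val - (v j).val)) :=
            (Finset.add_sum_erase _ _ (Finset.mem_univ i)).symm
          have s2 : (∑ j, (((v j).val - (u j).val) + ((u j).val - (v j).val))) =
              (((v i).val - (u i).val) + ((u i).val - (v i).val)) +
                ∑ j ∈ Finset.univ.erase i,
                  (((v j).val - (u j).val) + ((u j).val - (v j).val)) :=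
            (Finset.add_sum_erase _ _ (Finset.mem_univ i)).symm
          have s3 : (∑ j ∈ Finset.univ.erase i,
                (((v j).val - (u' j).val) + ((u' j).val - (v j).val))) =
              ∑ j ∈ Finset.univ.erase i,
                (((v j).val - (u j).val) + ((u j).val - (v j).val)) := by
            refine Finset.sum_congr rfl fun j hj => ?_
            rw [hu'def, Function.update_of_ne (Finset.ne_of_mem_erase hj)]
          rw [hup, hval'] at s1
          omega
        exact ((SimpleGraph.Adj.reachable (by exact hadj :
          ((torusGraph n (fun i => (c i + 1) * k i)).induce (Sset n c k)).Adj
            ⟨u, hu⟩ ⟨u', hu'⟩))).trans (ih u' v hu' hv hb' hd')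
      · have hlt : (v i).val < (u i).val := by omega
        obtain ⟨hS', hblk', hval'⟩ :=
          step_up (hq' hc i) (hk i) (v i) (u i) (hv i) (hu i) (hb i).symm hlt
        set v' := Function.update v i (v i + 1) with hv'def
        have hv' : v' ∈ Sset n c k := by
          intro j
          by_cases hj : j = i
          · subst hj; rw [hv'def, Function.update_self]; exact hS'
          · rw [hv'def, Function.update_of_ne hj]; exact hv j
        have hadj : (torusGraph n (fun i => (c i + 1) * k i)).Adj v v' := by
          refine ⟨?_, i, Or.inl (Function.update_self i _ v), fun j hj =>
            (Function.update_of_ne hj _ v).symm⟩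
          intro h
          have h2 := congrFun h i
          rw [hv'def, Function.update_self] at h2
          exact add_one_ne (hq' hc i) (hk i) (v i) h2.symm
        have hb' : ∀ j, blk (c j + 1) (k j) (u j) = blk (c j + 1) (k j) (v' j) := by
          intro j
          by_cases hj : j = i
          · subst hj; rw [hv'def, Function.update_self, hblk']; exact hb j
          · rw [hv'def, Function.update_of_ne hj]; exact hb j
        have hd' : (∑ j, (((v' j).val - (u j).val) + ((u j).val - (v' j).val))) ≤ d := by
          have hvp : v' i = v i + 1 := Function.update_self i _ v
          have s1 : (∑ j, (((v' j).val - (u j).val) + ((u j).val - (v' j).val))) =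
              (((v' i).val - (u i).val) + ((u i).val - (v' i).val)) +
                ∑ j ∈ Finset.univ.erase i,
                  (((v' j).val - (u j).val) + ((u j).val - (v' j).val)) :=
            (Finset.add_sum_erase _ _ (Finset.mem_univ i)).symm
          have s2 : (∑ j, (((v j).val - (u j).val) + ((u j).val - (v j).val))) =
              (((v i).val - (u i).val) + ((u i).val - (v i).val)) +
                ∑ j ∈ Finset.univ.erase i,
                  (((v j).val - (u j).val) + ((u j).val - (v j).val)) :=
            (Finset.add_sum_erase _ _ (Finset.mem_univ i)).symm
          have s3 : (∑ j ∈ Finset.univ.erase i,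
                (((v' j).val - (u j).val) + ((u j).val - (v' j).val))) =
              ∑ j ∈ Finset.univ.erase i,
                (((v j).val - (u j).val) + ((u j).val - (v j).val)) := by
            refine Finset.sum_congr rfl fun j hj => ?_
            rw [hv'def, Function.update_of_ne (Finset.ne_of_mem_erase hj)]
          rw [hvp, hval'] at s1
          omega
        exact (ih u v' hu hv' hb' hd').trans
          (SimpleGraph.Adj.reachable (by exact hadj :
            ((torusGraph n (fun i => (c i + 1) * k i)).induce (Sset n c k)).Adj
              ⟨v, hv⟩ ⟨v', hv'⟩)).symm

lemma blk_const (hc : ∀ i, 2 ≤ c i) (hk : ∀ i, 1 ≤ k i)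
    {a b : ↥(Sset n c k)}
    (h : ((torusGraph n (fun i => (c i + 1) * k i)).induce (Sset n c k)).Reachable a b) :
    ∀ i, blk (c i + 1) (k i) (a.1 i) = blk (c i + 1) (k i) (b.1 i) := by
  obtain ⟨p⟩ := h
  induction p with
  | nil => intro i; rfl
  | @cons x y z hadj p ih =>
    intro i
    refine Eq.trans ?_ (ih i)
    obtain ⟨hne, i₀, hio, hjo⟩ := hadj
    by_cases hj : i = i₀
    · subst hj
      exact (adj_blk (hq' hc i) (hk i) (x.1 i) (y.1 i) (x.2 i) (y.2 i) hio).symm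
    · exact congrArg (blk (c i + 1) (k i)) (hjo i hj)

lemma mk_eq_iff (hc : ∀ i, 2 ≤ c i) (hk : ∀ i, 1 ≤ k i)
    {u v : Π i : Fin n, ZMod ((c i + 1) * k i)} (hu : u ∈ Sset n c k)
    (hv : v ∈ Sset n c k) :
    ((torusGraph n (fun i => (c i + 1) * k i)).induce
        (Sset n c k)).connectedComponentMk ⟨u, hu⟩ =
      ((torusGraph n (fun i => (c i + 1) * k i)).induce
        (Sset n c k)).connectedComponentMk ⟨v, hv⟩ ↔
      ∀ i, blk (c i + 1) (k i) (u i) = blk (c i + 1) (k i) (v i) := by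
  rw [SimpleGraph.ConnectedComponent.eq]
  constructor
  · exact fun h => blk_const hc hk h
  · intro h
    exact reach_of_blk hc hk _ u v hu hv h le_rfl

lemma mem_verts_iff (hc : ∀ i, 2 ≤ c i) (hk : ∀ i, 1 ≤ k i)
    {w : Π i : Fin n, ZMod ((c i + 1) * k i)} (hw : w ∈ Sset n c k)
    (v : Π i : Fin n, ZMod ((c i + 1) * k i)) :
    v ∈ tCompVerts n (fun i => (c i + 1) * k i) (Sset n c k)
        (((torusGraph n (fun i => (c i + 1) * k i)).induce
          (Sset n c k)).connectedComponentMk ⟨w, hw⟩) ↔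
      v ∈ Sset n c k ∧ ∀ i, blk (c i + 1) (k i) (v i) = blk (c i + 1) (k i) (w i) := by
  constructor
  · rintro ⟨hv, hmk⟩
    exact ⟨hv, (mk_eq_iff hc hk hv hw).mp hmk⟩
  · rintro ⟨hv, hb⟩
    exact ⟨hv, (mk_eq_iff hc hk hv hw).mpr hb⟩

end
end S4Glob

/-- For `c i ≥ 2`, `k i ≥ 1` and `m i = (c i + 1) * k i`, the toroidal
grid `C_{m 0} □ ⋯ □ C_{m (n-1)}` contains an `n`-PTMC whose induced components are the
images under coordinatewise reduction of translates of the box `Π_i {0,…,c i − 2}`. -/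
theorem stmt_4 (n : ℕ) (hn : 1 ≤ n) (c k : Fin n → ℕ) (hc : ∀ i, 2 ≤ c i)
    (hk : ∀ i, 1 ≤ k i) :
    ∃ S : Set (Π i : Fin n, ZMod ((c i + 1) * k i)),
      IsTorusPTMC n (fun i => (c i + 1) * k i) n S ∧
      ∀ H : ((torusGraph n (fun i => (c i + 1) * k i)).induce S).ConnectedComponent,
        ∃ w : Fin n → ℤ,
          tCompVerts n (fun i => (c i + 1) * k i) S H =
            (fun v : Fin n → ℤ => fun i => ((v i : ℤ) : ZMod ((c i + 1) * k i))) ''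
              {v : Fin n → ℤ | ∀ i, w i ≤ v i ∧ v i ≤ w i + (c i : ℤ) - 2} := by
  classical
  have hq : ∀ i, 3 ≤ c i + 1 := fun i => by have := hc i; omega
  refine ⟨S4Glob.Sset n c k, ⟨?_, ?_⟩, ?_⟩
  · -- part (i)
    intro u
    set F : Π i : Fin n, ZMod ((c i + 1) * k i) :=
      fun i => S4Aux.near (c i + 1) (k i) (u i) with hFdef
    have hFS : F ∈ S4Glob.Sset n c k := fun i => S4Aux.inS_near (hq i) (hk i) (u i)
    have hcond : ∀ i, u i = F i ∨ u i - F i = 1 ∨ u i - F i = -1 :=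
      fun i => S4Aux.near_diff (hq i) (hk i) (u i)
    have hcardn : (Finset.univ.filter
        fun i => ¬ S4Aux.inS (c i + 1) (k i) (u i)).card ≤ n := by
      simpa using Finset.card_filter_le Finset.univ
        (fun i => ¬ S4Aux.inS (c i + 1) (k i) (u i))
    have hrho : ttrho n (fun i => (c i + 1) * k i) u F =
        (Finset.univ.filter fun i => ¬ S4Aux.inS (c i + 1) (k i) (u i)).card := by
      unfold ttrho
      rw [if_pos hcond]
      congr 1
      apply Finset.filter_congr
      intro i _
      constructor
      · intro hne hin
        exact hne (by rw [hFdef]; exact (S4Aux.near_eq_self (u i) hin).symm)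
      · intro hnin he
        exact S4Aux.near_ne_self (hq i) (hk i) (u i) hnin he.symm
    have hlow : ∀ s ∈ S4Glob.Sset n c k,
        (Finset.univ.filter fun i => ¬ S4Aux.inS (c i + 1) (k i) (u i)).card ≤
          ttrho n (fun i => (c i + 1) * k i) u s := by
      intro s hs
      unfold ttrho
      split
      · apply Finset.card_le_card
        intro i hi
        rw [Finset.mem_filter] at hi ⊢
        exact ⟨hi.1, fun he => hi.2 (by rw [he]; exact hs i)⟩
      · omega
    have hmin : ttrhoSet n (fun i => (c i + 1) * k i) u (S4Glob.Sset n c k) =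
        (Finset.univ.filter fun i => ¬ S4Aux.inS (c i + 1) (k i) (u i)).card := by
      refine le_antisymm (Nat.sInf_le ⟨F, hFS, hrho⟩) ?_
      refine le_csInf ⟨_, F, hFS, rfl⟩ ?_
      rintro d ⟨s, hs, rfl⟩
      exact hlow s hs
    refine ⟨F, ⟨hFS, by rw [hrho, hmin]⟩, ?_⟩
    rintro s ⟨hsS, hseq⟩
    rw [hmin] at hseq
    have hcondS : ∀ i, u i = s i ∨ u i - s i = 1 ∨ u i - s i = -1 := by
      by_contra hcon
      unfold ttrho at hseq
      rw [if_neg hcon] at hseq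
      omega
    unfold ttrho at hseq
    rw [if_pos hcondS] at hseq
    have hsub : (Finset.univ.filter fun i => ¬ S4Aux.inS (c i + 1) (k i) (u i)) ⊆
        (Finset.univ.filter fun i => u i ≠ s i) := by
      intro i hi
      rw [Finset.mem_filter] at hi ⊢
      exact ⟨hi.1, fun he => hi.2 (by rw [he]; exact hsS i)⟩
    have heqset := Finset.eq_of_subset_of_card_le hsub (le_of_eq hseq)
    funext i
    by_cases hin : S4Aux.inS (c i + 1) (k i) (u i)
    · have hnm : i ∉ (Finset.univ.filter fun i => ¬ S4Aux.inS (c i + 1) (k i) (u i)) := by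
        simp [hin]
      rw [heqset, Finset.mem_filter] at hnm
      push_neg at hnm
      have he : u i = s i := hnm (Finset.mem_univ i)
      rw [← he, hFdef]
      exact (S4Aux.near_eq_self (u i) hin).symm
    · exact S4Aux.near_unique (hq i) (hk i) (u i) (s i) (hsS i) hin (hcondS i)
  · -- part (ii)
    intro u
    set F : Π i : Fin n, ZMod ((c i + 1) * k i) :=
      fun i => S4Aux.near (c i + 1) (k i) (u i) with hFdef
    have hFS : F ∈ S4Glob.Sset n c k := fun i => S4Aux.inS_near (hq i) (hk i) (u i)
    have hcond : ∀ i, u i = F i ∨ u i - F i = 1 ∨ u i - F i = -1 :=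
      fun i => S4Aux.near_diff (hq i) (hk i) (u i)
    have hcardn : (Finset.univ.filter
        fun i => ¬ S4Aux.inS (c i + 1) (k i) (u i)).card ≤ n := by
      simpa using Finset.card_filter_le Finset.univ
        (fun i => ¬ S4Aux.inS (c i + 1) (k i) (u i))
    have hrho : ttrho n (fun i => (c i + 1) * k i) u F =
        (Finset.univ.filter fun i => ¬ S4Aux.inS (c i + 1) (k i) (u i)).card := by
      unfold ttrho
      rw [if_pos hcond]
      congr 1
      apply Finset.filter_congr
      intro i _
      constructor
      · intro hne hin
        exact hne (by rw [hFdef]; exact (S4Aux.near_eq_self (u i) hin).symm)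
      · intro hnin he
        exact S4Aux.near_ne_self (hq i) (hk i) (u i) hnin he.symm
    refine ⟨((torusGraph n (fun i => (c i + 1) * k i)).induce
        (S4Glob.Sset n c k)).connectedComponentMk ⟨F, hFS⟩, ?_, ?_⟩
    · have hmem : F ∈ tCompVerts n (fun i => (c i + 1) * k i) (S4Glob.Sset n c k)
          (((torusGraph n (fun i => (c i + 1) * k i)).induce
            (S4Glob.Sset n c k)).connectedComponentMk ⟨F, hFS⟩) := ⟨hFS, rfl⟩
      exact le_trans (Nat.sInf_le ⟨F, hmem, rfl⟩) (by rw [hrho]; exact hcardn)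
    · intro H' hH'
      obtain ⟨a, ha⟩ := H'.exists_rep
      obtain ⟨w, hwS⟩ := a
      have hwMem : w ∈ tCompVerts n (fun i => (c i + 1) * k i) (S4Glob.Sset n c k) H' :=
        ⟨hwS, ha⟩
      have hnemp : {d | ∃ s ∈ tCompVerts n (fun i => (c i + 1) * k i)
          (S4Glob.Sset n c k) H', ttrho n (fun i => (c i + 1) * k i) u s = d}.Nonempty :=
        ⟨_, w, hwMem, rfl⟩
      obtain ⟨s, hsVert, hsval⟩ := Nat.sInf_mem hnemp
      have hsle : ttrho n (fun i => (c i + 1) * k i) u s ≤ n := by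
        rw [hsval]; exact hH'
      obtain ⟨hsS, hsmk⟩ := hsVert
      have hcondS : ∀ i, u i = s i ∨ u i - s i = 1 ∨ u i - s i = -1 := by
        by_contra hcon
        unfold ttrho at hsle
        rw [if_neg hcon] at hsle
        omega
      rw [← hsmk]
      apply (S4Glob.mk_eq_iff hc hk hsS hFS).mpr
      intro i
      have h1 := S4Aux.bla_of_nbr (hq i) (hk i) (u i) (s i) (hsS i) (hcondS i)
      have h2 := S4Aux.bla_near (hq i) (hk i) (u i)
      rw [← h1, h2, hFdef]
  · -- part (iii)
    intro H
    obtain ⟨a, ha⟩ := H.exists_rep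
    obtain ⟨w, hwS⟩ := a
    subst ha
    refine ⟨fun i => ((S4Aux.blk (c i + 1) (k i) (w i) * (c i + 1) : ℕ) : ℤ), ?_⟩
    ext x
    constructor
    · rintro ⟨hxS, hxmk⟩
      have hblk : ∀ i, S4Aux.blk (c i + 1) (k i) (x i) = S4Aux.blk (c i + 1) (k i) (w i) :=
        (S4Glob.mk_eq_iff hc hk hxS hwS).mp hxmk
      refine ⟨fun i => ((x i).val : ℤ), fun i => ?_, ?_⟩
      · obtain ⟨h1, h2, h3⟩ := S4Aux.int_box_fwd (hq i) (hk i) (x i) (hxS i)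
        rw [hblk i] at h1 h2
        push_cast at h1 h2 ⊢
        omega
      · funext i
        exact (S4Aux.int_box_fwd (hq i) (hk i) (x i) (hxS i)).2.2
    · rintro ⟨v, hv, rfl⟩
      have hS : ∀ i, S4Aux.inS (c i + 1) (k i) ((v i : ZMod ((c i + 1) * k i))) ∧
          S4Aux.blk (c i + 1) (k i) ((v i : ZMod ((c i + 1) * k i))) =
            S4Aux.blk (c i + 1) (k i) (w i) := by
        intro i
        apply S4Aux.int_box_bwd (hq i) (hk i) _ (S4Aux.blk_lt (hq i) (hk i) (w i)) (v i)
        · exact (hv i).1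
        · have h2 := (hv i).2
          push_cast at h2 ⊢
          omega
      refine ⟨fun i => (hS i).1, ?_⟩
      exact (S4Glob.mk_eq_iff hc hk _ hwS).mpr fun i => (hS i).2
end
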